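/- arXiv:1311.3726 — 4 statements merged into one kernel-verified Lean document; each statement's English description precedes it below -/
import Mathlib

section
/- Set g₀ := −f and assume (*): for each i = 1,…,n there exists j_i with 0 ≤ j_i ≤ m such that (g_{j_i})_{d,i} < 0 and (g_j)_{d,i} = 0 for all j > j_i. Let A = (a_{jk})_{j,k=0,…,m} be any real matrix with a_{jj} = 1 for all j, a_{jk} = 0 for k > j, and a_{jk} ≤ 0 for k < j, such that for each i = 1,…,n exactly one of (h₀)_{d,i},…,(h_m)_{d,i} is strictly negative, where h_k := ∑_{j=0}^m a_{jk} g_j. If, in addition, Δ(−g_j) = ∅ for j = 1,…,m and h_k(0) = g_k(0) + ∑_{j>k} a_{jk} g_j(0) ≥ 0 for all k = 1,…,m, then f^A_{gp,g} = s(f,g) (as elements of ℝ ∪ {±∞}). -/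
open MvPolynomial Finset

noncomputable section

/-- `Finset.filter` with classical decidability. -/
def pfilter {β : Type*} (s : Finset β) (q : β → Prop) : Finset β :=
  @Finset.filter β q (fun _ => Classical.propDecidable _) s

/-- `|α| := α₁ + ⋯ + αₙ` for a multi-index `α`. -/
def adeg {n : ℕ} (α : Fin n →₀ ℕ) : ℕ := ∑ i, α i

/-- `Ω(p) := {α : |α| ≤ d, p_α ≠ 0, α ∉ {0, ε₁, …, εₙ}}`. -/
def OmegaSet {n : ℕ} (d : ℕ) (p : MvPolynomial (Fin n) ℝ) : Finset (Fin n →₀ ℕ) :=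
  pfilter p.support (fun α => adeg α ≤ d ∧ α ≠ 0 ∧ ∀ i, α ≠ Finsupp.single i d)

/-- `Δ(p) := {α ∈ Ω(p) : p_α x^α is not a square}`. -/
def DelSet {n : ℕ} (d : ℕ) (p : MvPolynomial (Fin n) ℝ) : Finset (Fin n →₀ ℕ) :=
  pfilter (OmegaSet d p)
    (fun α => ¬ IsSquare ((monomial α (p.coeff α)) : MvPolynomial (Fin n) ℝ))

/-- Feasibility for program (lw) for `p`. -/
def LwFeas {n : ℕ} (d : ℕ) (p : MvPolynomial (Fin n) ℝ)
    (z : (Fin n →₀ ℕ) → Fin n → ℝ) : Prop :=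
  (∀ α ∈ DelSet d p, ∀ i, 0 ≤ z α i ∧ (z α i = 0 ↔ α i = 0)) ∧
  (∀ i, ∑ α ∈ DelSet d p, z α i ≤ p.coeff (Finsupp.single i d)) ∧
  (∀ α ∈ DelSet d p, adeg α = d →
    ∏ i, (z α i / (α i : ℝ)) ^ (α i) = (p.coeff α / (d : ℝ)) ^ d)

/-- The objective function `v` of program (lw). -/
def lwObj {n : ℕ} (d : ℕ) (p : MvPolynomial (Fin n) ℝ)
    (z : (Fin n →₀ ℕ) → Fin n → ℝ) : ℝ :=
  ∑ α ∈ pfilter (DelSet d p) (fun α => adeg α < d),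
    ((d : ℝ) - (adeg α : ℝ)) *
      (((p.coeff α / (d : ℝ)) ^ d * ∏ i, ((α i : ℝ) / z α i) ^ (α i)) ^
        ((1 : ℝ) / ((d : ℝ) - (adeg α : ℝ))))

/-- `ρ(p) ∈ [0,∞]`, the infimum of `v` over the feasible set (`⊤` if infeasible). -/
def lwRho {n : ℕ} (d : ℕ) (p : MvPolynomial (Fin n) ℝ) : EReal :=
  sInf ((fun z => ((lwObj d p z : ℝ) : EReal)) '' {z | LwFeas d p z})

/-- `p_gp := p(0) − ρ(p) ∈ ℝ ∪ {−∞}`. -/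
def lwGp {n : ℕ} (d : ℕ) (p : MvPolynomial (Fin n) ℝ) : EReal :=
  ((eval (0 : Fin n → ℝ) p : ℝ) : EReal) - lwRho d p

/-- `G(λ) := f − ∑ⱼ λⱼ gⱼ`. -/
def polyG {n m : ℕ} (f : MvPolynomial (Fin n) ℝ) (g : Fin m → MvPolynomial (Fin n) ℝ)
    (lam : Fin m → ℝ) : MvPolynomial (Fin n) ℝ :=
  f - ∑ j, C (lam j) * g j

/-- `s(f,g) := sup{G(λ)_gp : λ ∈ [0,∞)^m}`. -/
def sBound {n m : ℕ} (d : ℕ) (f : MvPolynomial (Fin n) ℝ)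
    (g : Fin m → MvPolynomial (Fin n) ℝ) : EReal :=
  sSup ((fun lam => lwGp d (polyG f g lam)) '' {lam : Fin m → ℝ | ∀ j, 0 ≤ lam j})


/-- `h_k := ∑_{j=0}^m a_{jk} g_j` for `gext = (g₀, g₁, …, g_m)` with `g₀ = −f`. -/
def hpoly {n m : ℕ} (gext : Fin (m+1) → MvPolynomial (Fin n) ℝ)
    (A : Fin (m+1) → Fin (m+1) → ℝ) (k : Fin (m+1)) : MvPolynomial (Fin n) ℝ :=
  ∑ j, C (A j k) * gext j

/-- `μ` extended by `μ₀ := 1`. -/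
def muExt {m : ℕ} (mu : Fin m → ℝ) : Fin (m+1) → ℝ := Fin.cons 1 mu

/-- `H(μ) := −∑_{k=0}^m μ_k h_k`. -/
def Hpoly {n m : ℕ} (gext : Fin (m+1) → MvPolynomial (Fin n) ℝ)
    (A : Fin (m+1) → Fin (m+1) → ℝ) (mu : Fin m → ℝ) : MvPolynomial (Fin n) ℝ :=
  - ∑ k, C (muExt mu k) * hpoly gext A k

/-- `H(μ)_α^+ := −∑_{j : (h_j)_α < 0} (h_j)_α μ_j`. -/
def Hplus {n m : ℕ} (gext : Fin (m+1) → MvPolynomial (Fin n) ℝ)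
    (A : Fin (m+1) → Fin (m+1) → ℝ) (mu : Fin m → ℝ) (α : Fin n →₀ ℕ) : ℝ :=
  ∑ j, if (hpoly gext A j).coeff α < 0 then -((hpoly gext A j).coeff α * muExt mu j) else 0

/-- `H(μ)_α^− := ∑_{j : (h_j)_α > 0} (h_j)_α μ_j`. -/
def Hminus {n m : ℕ} (gext : Fin (m+1) → MvPolynomial (Fin n) ℝ)
    (A : Fin (m+1) → Fin (m+1) → ℝ) (mu : Fin m → ℝ) (α : Fin n →₀ ℕ) : ℝ :=
  ∑ j, if 0 < (hpoly gext A j).coeff α then (hpoly gext A j).coeff α * muExt mu j else 0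

/-- `Δ := Δ(f) ∪ Δ(−g₁) ∪ ⋯ ∪ Δ(−g_m)` (note `−g₀ = f`). -/
def DelTot2 {n m : ℕ} (d : ℕ) (gext : Fin (m+1) → MvPolynomial (Fin n) ℝ) :
    Finset (Fin n →₀ ℕ) :=
  Finset.univ.biUnion (fun j : Fin (m+1) => DelSet d (-(gext j)))

/-- Feasibility for program (lw2). -/
def Lw2Feas {n m : ℕ} (d : ℕ) (gext : Fin (m+1) → MvPolynomial (Fin n) ℝ)
    (A : Fin (m+1) → Fin (m+1) → ℝ)
    (z : (Fin n →₀ ℕ) → Fin n → ℝ) (w : (Fin n →₀ ℕ) → ℝ) (mu : Fin m → ℝ) : Prop :=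
  (∀ j, 0 < mu j) ∧
  (∀ α ∈ DelTot2 d gext, ∀ i, 0 ≤ z α i ∧ (z α i = 0 ↔ α i = 0)) ∧
  (∀ α ∈ DelTot2 d gext, 0 < w α) ∧
  (∀ i, ∑ α ∈ DelTot2 d gext, z α i ≤ (Hpoly gext A mu).coeff (Finsupp.single i d)) ∧
  (∀ α ∈ DelTot2 d gext, adeg α = d →
    (w α / (d : ℝ)) ^ d ≤ ∏ i, (z α i / (α i : ℝ)) ^ (α i)) ∧
  (∀ α ∈ DelTot2 d gext, max (Hplus gext A mu α) (Hminus gext A mu α) ≤ w α) ∧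
  (∀ j : Fin (m+1), j ≠ 0 → 0 ≤ ∑ k, A j k * muExt mu k)

/-- The objective function `t` of program (lw2). -/
def lw2Obj {n m : ℕ} (d : ℕ) (gext : Fin (m+1) → MvPolynomial (Fin n) ℝ)
    (A : Fin (m+1) → Fin (m+1) → ℝ)
    (z : (Fin n →₀ ℕ) → Fin n → ℝ) (w : (Fin n →₀ ℕ) → ℝ) (mu : Fin m → ℝ) : ℝ :=
  (∑ j : Fin m, mu j * max (eval (0 : Fin n → ℝ) (hpoly gext A j.succ)) 0) +
  ∑ α ∈ pfilter (DelTot2 d gext) (fun α => adeg α < d),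
    ((d : ℝ) - (adeg α : ℝ)) *
      (((w α / (d : ℝ)) ^ d * ∏ i, ((α i : ℝ) / z α i) ^ (α i)) ^
        ((1 : ℝ) / ((d : ℝ) - (adeg α : ℝ))))

/-- `ρ_A ∈ [0,∞]`, the optimal value of program (lw2) (`⊤` if infeasible). -/
def rhoA {n m : ℕ} (d : ℕ) (gext : Fin (m+1) → MvPolynomial (Fin n) ℝ)
    (A : Fin (m+1) → Fin (m+1) → ℝ) : EReal :=
  sInf ((fun t : ((Fin n →₀ ℕ) → Fin n → ℝ) × ((Fin n →₀ ℕ) → ℝ) × (Fin m → ℝ) =>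
      ((lw2Obj d gext A t.1 t.2.1 t.2.2 : ℝ) : EReal)) ''
    {t | Lw2Feas d gext A t.1 t.2.1 t.2.2})

/-- `f^A_{gp,g} := −h₀(0) − ρ_A ∈ ℝ ∪ {−∞}`. -/
def fAgp {n m : ℕ} (d : ℕ) (gext : Fin (m+1) → MvPolynomial (Fin n) ℝ)
    (A : Fin (m+1) → Fin (m+1) → ℝ) : EReal :=
  ((-(eval (0 : Fin n → ℝ) (hpoly gext A 0)) : ℝ) : EReal) - rhoA d gext A


section Aux

lemma mem_pfilter {β : Type*} {s : Finset β} {q : β → Prop} {a : β} :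
    a ∈ pfilter s q ↔ a ∈ s ∧ q a :=
  @Finset.mem_filter β q (fun _ => Classical.propDecidable _) s a

lemma adeg_eq_sum {n : ℕ} (α : Fin n →₀ ℕ) : (α.sum fun _ e => e) = adeg α :=
  Finsupp.sum_fintype _ _ (fun _ => rfl)

lemma coeff_zero_of_adeg_gt {n d : ℕ} {p : MvPolynomial (Fin n) ℝ}
    (hp : p.totalDegree ≤ d) {α : Fin n →₀ ℕ} (h : d < adeg α) : p.coeff α = 0 := by
  apply coeff_eq_zero_of_totalDegree_lt
  have := adeg_eq_sum α
  rw [Finsupp.sum] at this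
  omega

lemma mem_DelSet_iff {n d : ℕ} {p : MvPolynomial (Fin n) ℝ} {α : Fin n →₀ ℕ} :
    α ∈ DelSet d p ↔ p.coeff α ≠ 0 ∧ adeg α ≤ d ∧ α ≠ 0 ∧
      (∀ i, α ≠ Finsupp.single i d) ∧
      ¬ IsSquare ((monomial α (p.coeff α)) : MvPolynomial (Fin n) ℝ) := by
  rw [DelSet, mem_pfilter, OmegaSet, mem_pfilter, mem_support_iff]
  tauto

lemma coeff_zero_of_omega_empty {n d : ℕ} {p : MvPolynomial (Fin n) ℝ}
    (hdeg : p.totalDegree ≤ d) (h : OmegaSet d p = ∅) {α : Fin n →₀ ℕ}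
    (h1 : α ≠ 0) (h2 : ∀ i, α ≠ Finsupp.single i d) : p.coeff α = 0 := by
  by_contra hc
  rcases le_or_gt (adeg α) d with hle | hlt
  · have : α ∈ OmegaSet d p := by
      rw [OmegaSet, mem_pfilter, mem_support_iff]
      exact ⟨hc, hle, h1, h2⟩
    simp [h] at this
  · exact hc (coeff_zero_of_adeg_gt hdeg hlt)

lemma DelSet_congr {n d : ℕ} {p q : MvPolynomial ((Fin n)) ℝ}
    (h : ∀ α : Fin n →₀ ℕ, α ≠ 0 → (∀ i, α ≠ Finsupp.single i d) →
      p.coeff α = q.coeff α) : DelSet d p = DelSet d q := by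
  ext α
  rw [mem_DelSet_iff, mem_DelSet_iff]
  constructor
  · rintro ⟨h1, h2, h3, h4, h5⟩
    rw [h α h3 h4] at h1 h5
    exact ⟨h1, h2, h3, h4, h5⟩
  · rintro ⟨h1, h2, h3, h4, h5⟩
    rw [← h α h3 h4] at h1 h5
    exact ⟨h1, h2, h3, h4, h5⟩


lemma coeff_polyG {n m : ℕ} (f : MvPolynomial (Fin n) ℝ) (g : Fin m → MvPolynomial (Fin n) ℝ)
    (lam : Fin m → ℝ) (α : Fin n →₀ ℕ) :
    (polyG f g lam).coeff α = f.coeff α - ∑ j, lam j * (g j).coeff α := by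
  simp [polyG, coeff_sub, coeff_sum, coeff_C_mul]

lemma eval0_polyG {n m : ℕ} (f : MvPolynomial (Fin n) ℝ) (g : Fin m → MvPolynomial (Fin n) ℝ)
    (lam : Fin m → ℝ) :
    eval (0 : Fin n → ℝ) (polyG f g lam)
      = eval 0 f - ∑ j, lam j * eval (0 : Fin n → ℝ) (g j) := by
  simp [polyG]

lemma eval0_Hpoly {n m : ℕ} (gext : Fin (m+1) → MvPolynomial (Fin n) ℝ)
    (A : Fin (m+1) → Fin (m+1) → ℝ) (mu : Fin m → ℝ) :
    eval (0 : Fin n → ℝ) (Hpoly gext A mu)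
      = -(eval (0 : Fin n → ℝ) (hpoly gext A 0))
        - ∑ j : Fin m, mu j * eval (0 : Fin n → ℝ) (hpoly gext A j.succ) := by
  rw [Hpoly, map_neg, map_sum, Fin.sum_univ_succ]
  simp [muExt]
  ring

lemma Hpoly_eq_polyG {n m : ℕ} {f : MvPolynomial (Fin n) ℝ}
    {g : Fin m → MvPolynomial (Fin n) ℝ} {gext : Fin (m+1) → MvPolynomial (Fin n) ℝ}
    (hgext : gext = Fin.cons (-f) g) {A : Fin (m+1) → Fin (m+1) → ℝ}
    (hAdiag : ∀ j, A j j = 1) (hAupper : ∀ j k, j < k → A j k = 0)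
    (mu : Fin m → ℝ) :
    Hpoly gext A mu = polyG f g (fun j => ∑ k, A j.succ k * muExt mu k) := by
  have hrow0 : (∑ k, A 0 k * muExt mu k) = 1 := by
    rw [Fin.sum_univ_succ]
    have h0 : ∀ k : Fin m, A 0 k.succ * muExt mu k.succ = 0 := by
      intro k
      rw [hAupper 0 k.succ (Fin.succ_pos k), zero_mul]
    rw [Finset.sum_congr rfl (fun k _ => h0 k)]
    simp [hAdiag, muExt]
  have key : (∑ k, C (muExt mu k) * hpoly gext A k)
      = ∑ j, C (∑ k, A j k * muExt mu k) * gext j := by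
    have step1 : ∀ k, C (muExt mu k) * hpoly gext A k
        = ∑ j, C (A j k * muExt mu k) * gext j := by
      intro k
      rw [hpoly, Finset.mul_sum]
      apply Finset.sum_congr rfl
      intro j _
      rw [map_mul]
      ring
    rw [Finset.sum_congr rfl (fun k _ => step1 k), Finset.sum_comm]
    apply Finset.sum_congr rfl
    intro j _
    rw [← Finset.sum_mul, ← map_sum]
  rw [Hpoly, key, Fin.sum_univ_succ, hrow0, hgext]
  simp only [Fin.cons_zero, Fin.cons_succ, map_one, one_mul, polyG]
  ring

end Aux

section Context

variable {n m d : ℕ} {f : MvPolynomial (Fin n) ℝ} {g : Fin m → MvPolynomial (Fin n) ℝ}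
  {gext : Fin (m+1) → MvPolynomial (Fin n) ℝ} {A : Fin (m+1) → Fin (m+1) → ℝ}

lemma coeff_gext_zero (hgext : gext = Fin.cons (-f) g)
    (hdg : ∀ j, (g j).totalDegree ≤ d)
    (hO : ∀ j, OmegaSet d (-(gext j)) = DelSet d (-(gext j)))
    (hDelg : ∀ j : Fin (m+1), j ≠ 0 → DelSet d (-(gext j)) = ∅) :
    ∀ j : Fin (m+1), j ≠ 0 → ∀ α : Fin n →₀ ℕ, α ≠ 0 →
      (∀ i, α ≠ Finsupp.single i d) → (gext j).coeff α = 0 := by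
  intro j hj α h1 h2
  obtain ⟨j', rfl⟩ := Fin.eq_succ_of_ne_zero hj
  have hgj : gext j'.succ = g j' := by rw [hgext]; exact Fin.cons_succ _ _ _
  have hdeg : (-(gext j'.succ)).totalDegree ≤ d := by
    rw [totalDegree_neg, hgj]; exact hdg j'
  have h0 := coeff_zero_of_omega_empty hdeg
    ((hO j'.succ).trans (hDelg j'.succ hj)) h1 h2
  rw [coeff_neg, neg_eq_zero] at h0
  exact h0

lemma coeff_gext0 (hgext : gext = Fin.cons (-f) g) (α : Fin n →₀ ℕ) :
    (gext 0).coeff α = -(f.coeff α) := by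
  rw [hgext]
  simp [Fin.cons_zero]

lemma coeff_polyG_off (hgext : gext = Fin.cons (-f) g)
    (hdg : ∀ j, (g j).totalDegree ≤ d)
    (hO : ∀ j, OmegaSet d (-(gext j)) = DelSet d (-(gext j)))
    (hDelg : ∀ j : Fin (m+1), j ≠ 0 → DelSet d (-(gext j)) = ∅)
    (lam : Fin m → ℝ) (α : Fin n →₀ ℕ) (h1 : α ≠ 0)
    (h2 : ∀ i, α ≠ Finsupp.single i d) :
    (polyG f g lam).coeff α = f.coeff α := by
  rw [coeff_polyG]
  have : ∀ j : Fin m, lam j * (g j).coeff α = 0 := by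
    intro j
    have hgj : g j = gext j.succ := by rw [hgext, Fin.cons_succ]
    rw [hgj, coeff_gext_zero hgext hdg hO hDelg j.succ (Fin.succ_ne_zero j) α h1 h2,
      mul_zero]
  rw [Finset.sum_congr rfl (fun j _ => this j), Finset.sum_const_zero, sub_zero]

lemma DelSet_polyG (hgext : gext = Fin.cons (-f) g)
    (hdg : ∀ j, (g j).totalDegree ≤ d)
    (hO : ∀ j, OmegaSet d (-(gext j)) = DelSet d (-(gext j)))
    (hDelg : ∀ j : Fin (m+1), j ≠ 0 → DelSet d (-(gext j)) = ∅)
    (lam : Fin m → ℝ) :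
    DelSet d (polyG f g lam) = DelSet d f :=
  DelSet_congr (fun α h1 h2 => coeff_polyG_off hgext hdg hO hDelg lam α h1 h2)

lemma DelTot2_eq (hgext : gext = Fin.cons (-f) g)
    (hDelg : ∀ j : Fin (m+1), j ≠ 0 → DelSet d (-(gext j)) = ∅) :
    DelTot2 d gext = DelSet d f := by
  have h0 : -(gext 0) = f := by rw [hgext]; simp [Fin.cons_zero]
  ext α
  rw [DelTot2, Finset.mem_biUnion]
  constructor
  · rintro ⟨j, _, hα⟩
    by_cases hj : j = 0
    · rw [hj, h0] at hα; exact hα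
    · rw [hDelg j hj] at hα; simp at hα
  · intro hα
    exact ⟨0, Finset.mem_univ _, by rw [h0]; exact hα⟩

lemma coeff_hpoly_off (hgext : gext = Fin.cons (-f) g)
    (hdg : ∀ j, (g j).totalDegree ≤ d)
    (hO : ∀ j, OmegaSet d (-(gext j)) = DelSet d (-(gext j)))
    (hDelg : ∀ j : Fin (m+1), j ≠ 0 → DelSet d (-(gext j)) = ∅)
    (k : Fin (m+1)) (α : Fin n →₀ ℕ) (h1 : α ≠ 0)
    (h2 : ∀ i, α ≠ Finsupp.single i d) :
    (hpoly gext A k).coeff α = -(A 0 k * f.coeff α) := by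
  rw [hpoly]
  have hsum : coeff α (∑ j : Fin (m+1), C (A j k) * gext j)
      = ∑ j : Fin (m+1), A j k * coeff α (gext j) := by
    simp [coeff_sum, coeff_C_mul]
  rw [hsum, Fin.sum_univ_succ, coeff_gext0 hgext]
  have : ∀ j : Fin m, A j.succ k * (gext j.succ).coeff α = 0 := by
    intro j
    rw [coeff_gext_zero hgext hdg hO hDelg j.succ (Fin.succ_ne_zero j) α h1 h2, mul_zero]
  rw [Finset.sum_congr rfl (fun j _ => this j), Finset.sum_const_zero, add_zero]
  ring

lemma max_Hplus_Hminus (hgext : gext = Fin.cons (-f) g)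
    (hdg : ∀ j, (g j).totalDegree ≤ d)
    (hO : ∀ j, OmegaSet d (-(gext j)) = DelSet d (-(gext j)))
    (hDelg : ∀ j : Fin (m+1), j ≠ 0 → DelSet d (-(gext j)) = ∅)
    (hAdiag : ∀ j, A j j = 1) (hAupper : ∀ j k, j < k → A j k = 0)
    (mu : Fin m → ℝ) (α : Fin n →₀ ℕ) (h1 : α ≠ 0)
    (h2 : ∀ i, α ≠ Finsupp.single i d) :
    max (Hplus gext A mu α) (Hminus gext A mu α) = |f.coeff α| := by
  have hc0 : (hpoly gext A 0).coeff α = -(f.coeff α) := by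
    rw [coeff_hpoly_off hgext hdg hO hDelg 0 α h1 h2, hAdiag, one_mul]
  have hcs : ∀ j : Fin m, (hpoly gext A j.succ).coeff α = 0 := by
    intro j
    rw [coeff_hpoly_off hgext hdg hO hDelg j.succ α h1 h2,
      hAupper 0 j.succ (Fin.succ_pos j), zero_mul, neg_zero]
  have hP : Hplus gext A mu α = if 0 < f.coeff α then f.coeff α else 0 := by
    rw [Hplus, Fin.sum_univ_succ]
    have hz : ∀ j : Fin m, (if (hpoly gext A j.succ).coeff α < 0 then
        -((hpoly gext A j.succ).coeff α * muExt mu j.succ) else 0) = 0 := by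
      intro j
      rw [hcs j]
      simp
    rw [Finset.sum_congr rfl (fun j _ => hz j), Finset.sum_const_zero, add_zero, hc0]
    simp only [muExt, Fin.cons_zero, mul_one, neg_neg, neg_lt_zero]
  have hM : Hminus gext A mu α = if 0 < -(f.coeff α) then -(f.coeff α) else 0 := by
    rw [Hminus, Fin.sum_univ_succ]
    have hz : ∀ j : Fin m, (if 0 < (hpoly gext A j.succ).coeff α then
        (hpoly gext A j.succ).coeff α * muExt mu j.succ else 0) = 0 := by
      intro j
      rw [hcs j]
      simp
    rw [Finset.sum_congr rfl (fun j _ => hz j), Finset.sum_const_zero, add_zero, hc0]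
    simp only [muExt, Fin.cons_zero, mul_one]
  rw [hP, hM]
  rcases lt_trichotomy (f.coeff α) 0 with h | h | h
  · rw [if_neg (by linarith), if_pos (by linarith), abs_of_neg h]
    simp [le_of_lt h]
  · simp [h]
  · rw [if_pos h, if_neg (by linarith), abs_of_pos h]
    simp [le_of_lt h]

end Context



section Helpers


noncomputable def solveN (B : ℕ → ℕ → ℝ) (l : ℕ → ℝ) : ℕ → ℝ
  | j => l j - ∑ k ∈ (Finset.range j).attach, B j k.1 * solveN B l k.1
  decreasing_by exact Finset.mem_range.mp k.2

lemma solveN_eq (B : ℕ → ℕ → ℝ) (l : ℕ → ℝ) (j : ℕ) :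
    solveN B l j = l j - ∑ k ∈ Finset.range j, B j k * solveN B l k := by
  rw [solveN]
  congr 1
  rw [← Finset.sum_attach (Finset.range j) (fun k => B j k * solveN B l k)]

lemma solveN_ge (B : ℕ → ℕ → ℝ) (l : ℕ → ℝ)
    (hB : ∀ j k, k < j → B j k ≤ 0) (hl : ∀ j, 0 ≤ l j) :
    ∀ j, l j ≤ solveN B l j := by
  intro j
  induction j using Nat.strong_induction_on with
  | _ j ih =>
    rw [solveN_eq]
    have : ∑ k ∈ Finset.range j, B j k * solveN B l k ≤ 0 := by
      apply Finset.sum_nonpos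
      intro k hk
      have hk' := Finset.mem_range.mp hk
      exact mul_nonpos_of_nonpos_of_nonneg (hB j k hk')
        (le_trans (hl k) (ih k hk'))
    linarith

lemma exists_solve {m : ℕ} (A : Fin (m+1) → Fin (m+1) → ℝ)
    (hAdiag : ∀ j, A j j = 1) (hAupper : ∀ j k, j < k → A j k = 0)
    (hAlower : ∀ j k, k < j → A j k ≤ 0)
    (lam' : Fin (m+1) → ℝ) (hlam' : ∀ j, 0 ≤ lam' j) :
    ∃ ν : Fin (m+1) → ℝ, (∀ j, lam' j ≤ ν j) ∧ (ν 0 = lam' 0) ∧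
      (∀ j, ∑ k, A j k * ν k = lam' j) := by
  set Bhat : ℕ → ℕ → ℝ := fun j k =>
    if hj : j < m+1 then if hk : k < m+1 then A ⟨j, hj⟩ ⟨k, hk⟩ else 0 else 0 with hBhat
  set lhat : ℕ → ℝ := fun j => if hj : j < m+1 then lam' ⟨j, hj⟩ else 0 with hlhat
  have hB : ∀ j k, k < j → Bhat j k ≤ 0 := by
    intro j k hk
    by_cases hj : j < m+1
    · have hk2 : k < m+1 := lt_trans hk hj
      simp only [hBhat, dif_pos hj, dif_pos hk2]
      exact hAlower _ _ hk
    · simp only [hBhat, dif_neg hj, le_refl]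
  have hl : ∀ j, 0 ≤ lhat j := by
    intro j
    by_cases hj : j < m+1
    · simp only [hlhat, dif_pos hj]; exact hlam' _
    · simp only [hlhat, dif_neg hj, le_refl]
  refine ⟨fun j => solveN Bhat lhat j.1, ?_, ?_, ?_⟩
  · intro j
    have := solveN_ge Bhat lhat hB hl j.1
    simpa only [hlhat, dif_pos j.2] using this
  · show solveN Bhat lhat (0:ℕ) = lam' 0
    rw [solveN_eq]
    simp [hlhat]
  · intro j
    have hstep : ∀ k : Fin (m+1), A j k * solveN Bhat lhat k.1
        = Bhat j.1 k.1 * solveN Bhat lhat k.1 := by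
      intro k
      simp only [hBhat, dif_pos j.2, dif_pos k.2, Fin.eta]
    rw [Finset.sum_congr rfl (fun k _ => hstep k)]
    have hconv : ∑ k : Fin (m+1), Bhat j.1 k.1 * solveN Bhat lhat k.1
        = ∑ k ∈ Finset.range (m+1), Bhat j.1 k * solveN Bhat lhat k :=
      Fin.sum_univ_eq_sum_range (fun k => Bhat j.1 k * solveN Bhat lhat k) (m+1)
    rw [hconv]
    have htail : ∑ k ∈ Finset.range (m+1), Bhat j.1 k * solveN Bhat lhat k
        = ∑ k ∈ Finset.range (j.1+1), Bhat j.1 k * solveN Bhat lhat k := by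
      symm
      apply Finset.sum_subset
      · exact Finset.range_subset_range.mpr j.2
      · intro k hk hk2
        have hk3 : j.1 < k := by
          simp only [Finset.mem_range] at hk hk2
          omega
        have hkm : k < m+1 := Finset.mem_range.mp hk
        have : Bhat j.1 k = 0 := by
          simp only [hBhat, dif_pos j.2, dif_pos hkm]
          exact hAupper _ _ (by exact hk3)
        rw [this, zero_mul]
    rw [htail, Finset.sum_range_succ]
    have hdiag : Bhat j.1 j.1 = A j j := by
      simp only [hBhat, dif_pos j.2, Fin.eta]
    rw [hdiag, hAdiag, one_mul, solveN_eq]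
    have : lhat j.1 = lam' j := by simp only [hlhat, dif_pos j.2, Fin.eta]
    rw [this]
    ring


lemma exists_v {n m : ℕ} (d : ℕ) (c : Fin n → Fin (m+1) → ℝ)
    (hstar : ∀ i : Fin n, ∃ j : Fin (m+1), c i j < 0 ∧ ∀ j', j < j' → c i j' = 0) :
    ∃ v : Fin (m+1) → ℝ, (∀ j, 0 < v j) ∧
      ∀ i, ∑ j : Fin m, v j.succ * c i j.succ ≤ 0 := by
  choose J hJneg hJzero using hstar
  set δ : Fin n → ℝ := fun i => -(c i (J i)) with hδdef
  have hδ : ∀ i, 0 < δ i := fun i => by simp only [hδdef]; linarith [hJneg i]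
  set Ci : Fin n → ℝ := fun i => ∑ j : Fin (m+1), |c i j| with hCidef
  set M : ℝ := 1 + ∑ i : Fin n, max (Ci i / δ i) 0 with hMdef
  have hM1 : 1 ≤ M := by
    have : 0 ≤ ∑ i : Fin n, max (Ci i / δ i) 0 :=
      Finset.sum_nonneg (fun i _ => le_max_right _ _)
    simp only [hMdef]; linarith
  have hM0 : 0 < M := lt_of_lt_of_le one_pos hM1
  have hMi : ∀ i, Ci i ≤ M * δ i := by
    intro i
    have h1 : Ci i / δ i ≤ M := by
      have h2 : max (Ci i / δ i) 0 ≤ ∑ i : Fin n, max (Ci i / δ i) 0 :=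
        Finset.single_le_sum (f := fun i => max (Ci i / δ i) 0)
          (fun i _ => le_max_right _ _) (Finset.mem_univ i)
      have := le_max_left (Ci i / δ i) 0
      simp only [hMdef]; linarith
    rw [div_le_iff₀ (hδ i)] at h1
    linarith
  refine ⟨fun j => M ^ (j : ℕ), fun j => pow_pos hM0 _, ?_⟩
  intro i
  rcases Fin.eq_zero_or_eq_succ (J i) with hJ0 | ⟨J', hJ'⟩
  · have : ∀ j : Fin m, M ^ ((j.succ : Fin (m+1)) : ℕ) * c i j.succ = 0 := by
      intro j
      rw [hJzero i j.succ (by rw [hJ0]; exact Fin.succ_pos j), mul_zero]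
    rw [Finset.sum_congr rfl (fun j _ => this j)]
    simp
  · set N : ℕ := (J' : ℕ) with hNdef
    have hJval : ((J i : Fin (m+1)) : ℕ) = N + 1 := by rw [hJ']; simp [hNdef]
    have hbound : ∀ j : Fin m, j ≠ J' →
        M ^ ((j.succ : Fin (m+1)) : ℕ) * c i j.succ ≤ M ^ N * |c i j.succ| := by
      intro j hj
      rcases lt_or_ge (J i) j.succ with hlt | hle
      · rw [hJzero i j.succ hlt]
        simp
      · have hlt2 : (j.succ : Fin (m+1)) < J i := by
          rcases lt_or_eq_of_le hle with h | h
          · exact h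
          · exact absurd (Fin.succ_injective _ (h.trans hJ')) hj
        have hval : ((j.succ : Fin (m+1)) : ℕ) ≤ N := by
          have := Fin.lt_iff_val_lt_val.mp hlt2
          omega
        calc M ^ ((j.succ : Fin (m+1)) : ℕ) * c i j.succ
            ≤ M ^ ((j.succ : Fin (m+1)) : ℕ) * |c i j.succ| := by
              apply mul_le_mul_of_nonneg_left (le_abs_self _) (le_of_lt (pow_pos hM0 _))
          _ ≤ M ^ N * |c i j.succ| := by
              apply mul_le_mul_of_nonneg_right (pow_le_pow_right₀ hM1 hval) (abs_nonneg _)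
    have hsplit : ∑ j : Fin m, M ^ ((j.succ : Fin (m+1)) : ℕ) * c i j.succ
        = M ^ ((J'.succ : Fin (m+1)) : ℕ) * c i J'.succ
          + ∑ j ∈ Finset.univ.erase J', M ^ ((j.succ : Fin (m+1)) : ℕ) * c i j.succ := by
      exact (Finset.add_sum_erase _ _ (Finset.mem_univ J')).symm
    rw [hsplit]
    have hterm : M ^ ((J'.succ : Fin (m+1)) : ℕ) * c i J'.succ = -(M ^ (N+1) * δ i) := by
      rw [← hJ', hJval, hδdef]
      ring
    have hrest : ∑ j ∈ Finset.univ.erase J', M ^ ((j.succ : Fin (m+1)) : ℕ) * c i j.succ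
        ≤ M ^ N * Ci i := by
      calc ∑ j ∈ Finset.univ.erase J', M ^ ((j.succ : Fin (m+1)) : ℕ) * c i j.succ
          ≤ ∑ j ∈ Finset.univ.erase J', M ^ N * |c i j.succ| :=
            Finset.sum_le_sum (fun j hj => hbound j (Finset.ne_of_mem_erase hj))
        _ ≤ ∑ j : Fin m, M ^ N * |c i j.succ| := by
            apply Finset.sum_le_sum_of_subset_of_nonneg (Finset.erase_subset _ _)
            intro j _ _
            exact mul_nonneg (le_of_lt (pow_pos hM0 _)) (abs_nonneg _)
        _ = M ^ N * ∑ j : Fin m, |c i j.succ| := by rw [Finset.mul_sum]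
        _ ≤ M ^ N * Ci i := by
            apply mul_le_mul_of_nonneg_left _ (le_of_lt (pow_pos hM0 _))
            have hCi : Ci i = |c i 0| + ∑ j : Fin m, |c i j.succ| := by
              simp only [hCidef]
              rw [Fin.sum_univ_succ]
            rw [hCi]
            have := abs_nonneg (c i 0)
            linarith
    have hfin : M ^ N * Ci i ≤ M ^ N * (M * δ i) :=
      mul_le_mul_of_nonneg_left (hMi i) (le_of_lt (pow_pos hM0 _))
    have : M ^ N * (M * δ i) = M ^ (N+1) * δ i := by ring
    rw [hterm]
    linarith


lemma prod_scale {n : ℕ} (α : Fin n → ℕ) (z : Fin n → ℝ) (c : ℝ) :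
    ∏ i, (c * z i / (α i : ℝ)) ^ (α i)
      = c ^ (∑ i, α i) * ∏ i, (z i / (α i : ℝ)) ^ (α i) := by
  rw [← Finset.prod_pow_eq_pow_sum, ← Finset.prod_mul_distrib]
  apply Finset.prod_congr rfl
  intro i _
  rw [mul_div_assoc, mul_pow]

lemma prod_div_pos {n : ℕ} (α : Fin n → ℕ) (z : Fin n → ℝ)
    (hz : ∀ i, 0 ≤ z i ∧ (z i = 0 ↔ α i = 0)) :
    0 < ∏ i, (z i / (α i : ℝ)) ^ (α i) := by
  apply Finset.prod_pos
  intro i _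
  rcases Nat.eq_zero_or_pos (α i) with h0 | hpos
  · rw [h0, pow_zero]; exact one_pos
  · have hzi : 0 < z i := by
      rcases (hz i).1.lt_or_eq with h | h
      · exact h
      · exact absurd ((hz i).2.mp h.symm) (Nat.pos_iff_ne_zero.mp hpos)
    exact pow_pos (div_pos hzi (by exact_mod_cast hpos)) _

lemma prod_div_nonneg {n : ℕ} (α : Fin n → ℕ) (z : Fin n → ℝ)
    (hz : ∀ i, 0 ≤ z i) : 0 ≤ ∏ i, ((α i : ℝ) / z i) ^ (α i) :=
  Finset.prod_nonneg (fun i _ => pow_nonneg (div_nonneg (Nat.cast_nonneg _) (hz i)) _)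

lemma helperL {ι : Type*} (P : Set ι) (F : ι → ℝ) (c : ℝ) (T : EReal)
    (h : ∀ p ∈ P, ((c - F p : ℝ) : EReal) ≤ T) :
    (c : EReal) - sInf ((fun p => ((F p : ℝ) : EReal)) '' P) ≤ T := by
  rcases P.eq_empty_or_nonempty with hP | ⟨p0, hp0⟩
  · rw [hP]
    simp
  · induction T using EReal.rec with
    | bot =>
      have hb := h p0 hp0
      rw [le_bot_iff] at hb
      exact absurd hb (EReal.coe_ne_bot _)
    | top => exact le_top
    | coe τ =>
      have hlb : ((c - τ : ℝ) : EReal)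
          ≤ sInf ((fun p => ((F p : ℝ) : EReal)) '' P) := by
        apply le_sInf
        rintro b ⟨p, hp, rfl⟩
        have hle : c - F p ≤ τ := EReal.coe_le_coe_iff.mp (h p hp)
        exact EReal.coe_le_coe_iff.mpr (by linarith)
      calc (c : EReal) - sInf ((fun p => ((F p : ℝ) : EReal)) '' P)
          ≤ (c : EReal) - ((c - τ : ℝ) : EReal) := EReal.sub_le_sub (le_refl _) hlb
        _ = ((c - (c - τ) : ℝ) : EReal) := by rw [← EReal.coe_sub]
        _ = ((τ : ℝ) : EReal) := by norm_num

lemma epsLe (a K : ℝ) (X : EReal)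
    (h : ∀ ε : ℝ, 0 < ε → ε ≤ 1 → ((a - ε * K : ℝ) : EReal) ≤ X) :
    (a : EReal) ≤ X := by
  induction X using EReal.rec with
  | bot =>
    have hb := h 1 one_pos le_rfl
    rw [le_bot_iff] at hb
    exact absurd hb (EReal.coe_ne_bot _)
  | top => exact le_top
  | coe x =>
    rw [EReal.coe_le_coe_iff]
    rcases le_or_gt K 0 with hK | hK
    · have := EReal.coe_le_coe_iff.mp (h 1 one_pos le_rfl)
      nlinarith
    · by_contra hx
      push_neg at hx
      set ε := min 1 ((a - x) / (2 * K)) with hε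
      have hε0 : 0 < ε := lt_min one_pos (div_pos (by linarith) (by linarith))
      have hε1 : ε ≤ 1 := min_le_left _ _
      have h1 := EReal.coe_le_coe_iff.mp (h ε hε0 hε1)
      have hεK : ε * K ≤ (a - x) / 2 := by
        calc ε * K ≤ ((a - x) / (2 * K)) * K :=
              mul_le_mul_of_nonneg_right (min_le_right _ _) (le_of_lt hK)
          _ = (a - x) / 2 := by field_simp
      linarith

end Helpers

/-- Theorem (important special case, part 2): under (*), with `A` lower triangular as in part 1,
if moreover `Δ(−g_j) = ∅` for `j = 1,…,m` and `h_k(0) ≥ 0` for `k = 1,…,m`, then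
`f^A_{gp,g} = s(f,g)`. -/
theorem stmt7 {n m : ℕ} (hn : 1 ≤ n) (d : ℕ)
    (f : MvPolynomial (Fin n) ℝ) (g : Fin m → MvPolynomial (Fin n) ℝ)
    (hd2 : 2 ≤ d) (hde : Even d) (hdf : f.totalDegree ≤ d)
    (hdg : ∀ j, (g j).totalDegree ≤ d)
    (hdLeast : ∀ d' : ℕ, Even d' → 2 ≤ d' → f.totalDegree ≤ d' →
      (∀ j, (g j).totalDegree ≤ d') → d ≤ d')
    (gext : Fin (m+1) → MvPolynomial (Fin n) ℝ) (hgext : gext = Fin.cons (-f) g)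
    (hO : ∀ j, OmegaSet d (-(gext j)) = DelSet d (-(gext j)))
    (hstar : ∀ i : Fin n, ∃ j : Fin (m+1),
      (gext j).coeff (Finsupp.single i d) < 0 ∧
      ∀ j', j < j' → (gext j').coeff (Finsupp.single i d) = 0)
    (A : Fin (m+1) → Fin (m+1) → ℝ)
    (hAdiag : ∀ j, A j j = 1) (hAupper : ∀ j k, j < k → A j k = 0)
    (hAlower : ∀ j k, k < j → A j k ≤ 0)
    (hneg : ∀ i : Fin n, ∃! k : Fin (m+1),
      (hpoly gext A k).coeff (Finsupp.single i d) < 0)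
    (hDelg : ∀ j : Fin (m+1), j ≠ 0 → DelSet d (-(gext j)) = ∅)
    (hh0 : ∀ k : Fin (m+1), k ≠ 0 → 0 ≤ eval (0 : Fin n → ℝ) (hpoly gext A k)) :
    fAgp d gext A = sBound d f g := by
  have hd0 : (d : ℝ) ≠ 0 := by
    have : (0:ℕ) < d := by omega
    exact_mod_cast this.ne'
  have hdpos : (0:ℝ) < d := by
    have : (0:ℕ) < d := by omega
    exact_mod_cast this
  have hDT : DelTot2 d gext = DelSet d f := DelTot2_eq hgext hDelg
  set c0 : ℝ := -(eval (0 : Fin n → ℝ) (hpoly gext A 0)) with hc0def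
  -- facts about elements of DelSet d f
  have hmemf : ∀ α ∈ DelSet d f, f.coeff α ≠ 0 ∧ adeg α ≤ d ∧ α ≠ 0 ∧
      (∀ i, α ≠ Finsupp.single i d) := by
    intro α hα
    obtain ⟨h1, h2, h3, h4, _⟩ := mem_DelSet_iff.mp hα
    exact ⟨h1, h2, h3, h4⟩
  -- the key pow fact
  have hpowabs : ∀ x : ℝ, (|x| / (d:ℝ))^d = (x / (d:ℝ))^d := by
    intro x
    rw [div_pow, div_pow, Even.pow_abs hde]
  apply le_antisymm
  · -- fAgp ≤ sBound
    rw [fAgp, rhoA]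
    apply helperL
    rintro ⟨z, w, mu⟩ hfeas
    simp only [Set.mem_setOf_eq] at hfeas
    obtain ⟨hmu, hziff, hwpos, hbudget, hprodge, hwmax, hAmu⟩ := hfeas
    set lam : Fin m → ℝ := fun j => ∑ k, A j.succ k * muExt mu k with hlamdef
    have hlam0 : ∀ j, 0 ≤ lam j := fun j => hAmu j.succ (Fin.succ_ne_zero j)
    have hHp : Hpoly gext A mu = polyG f g lam :=
      Hpoly_eq_polyG hgext hAdiag hAupper mu
    have hDel : DelSet d (polyG f g lam) = DelSet d f :=
      DelSet_polyG hgext hdg hO hDelg lam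
    have hcoeffG : ∀ α ∈ DelSet d f, (polyG f g lam).coeff α = f.coeff α := by
      intro α hα
      obtain ⟨_, _, h3, h4⟩ := hmemf α hα
      exact coeff_polyG_off hgext hdg hO hDelg lam α h3 h4
    have hwabs : ∀ α ∈ DelSet d f, |f.coeff α| ≤ w α := by
      intro α hα
      obtain ⟨_, _, h3, h4⟩ := hmemf α hα
      have := hwmax α (by rw [hDT]; exact hα)
      rwa [max_Hplus_Hminus hgext hdg hO hDelg hAdiag hAupper mu α h3 h4] at this
    -- quantities
    set Pa : (Fin n →₀ ℕ) → ℝ := fun α => ∏ i, (z α i / (α i : ℝ)) ^ (α i) with hPadef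
    set Qa : (Fin n →₀ ℕ) → ℝ := fun α => (f.coeff α / (d:ℝ))^d / Pa α with hQadef
    set scl : (Fin n →₀ ℕ) → ℝ := fun α => (Qa α) ^ ((d:ℝ)⁻¹) with hscldef
    have hzδ : ∀ α ∈ DelSet d f, ∀ i, 0 ≤ z α i ∧ (z α i = 0 ↔ α i = 0) := by
      intro α hα
      exact hziff α (by rw [hDT]; exact hα)
    have hPa : ∀ α ∈ DelSet d f, 0 < Pa α := by
      intro α hα
      exact prod_div_pos _ _ (hzδ α hα)
    have hfd : ∀ α ∈ DelSet d f, 0 < (f.coeff α / (d:ℝ))^d := by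
      intro α hα
      exact (hde.pow_pos (div_ne_zero (hmemf α hα).1 hd0))
    have hQ : ∀ α ∈ DelSet d f, 0 < Qa α := by
      intro α hα
      exact div_pos (hfd α hα) (hPa α hα)
    have hfw : ∀ α ∈ DelSet d f, (f.coeff α / (d:ℝ))^d ≤ (w α / (d:ℝ))^d := by
      intro α hα
      rw [← hpowabs (f.coeff α)]
      apply pow_le_pow_left₀ (by positivity)
      gcongr
      exact hwabs α hα
    have hQ1 : ∀ α ∈ DelSet d f, adeg α = d → Qa α ≤ 1 := by
      intro α hα hd'
      simp only [hQadef]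
      rw [div_le_one (hPa α hα)]
      calc (f.coeff α / (d:ℝ))^d ≤ (w α / (d:ℝ))^d := hfw α hα
        _ ≤ Pa α := hprodge α (by rw [hDT]; exact hα) hd'
    have hscl_pos : ∀ α ∈ DelSet d f, 0 < scl α := by
      intro α hα
      exact Real.rpow_pos_of_pos (hQ α hα) _
    have hscl1 : ∀ α ∈ DelSet d f, adeg α = d → scl α ≤ 1 := by
      intro α hα hd'
      exact Real.rpow_le_one (le_of_lt (hQ α hα)) (hQ1 α hα hd') (by positivity)
    have hscl_pow : ∀ α ∈ DelSet d f, (scl α) ^ d = Qa α := by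
      intro α hα
      simp only [hscldef]
      rw [← Real.rpow_natCast ((Qa α) ^ ((d:ℝ)⁻¹)) d, ← Real.rpow_mul (le_of_lt (hQ α hα)),
        inv_mul_cancel₀ hd0, Real.rpow_one]
    classical
    set z' : (Fin n →₀ ℕ) → Fin n → ℝ := fun α i =>
      if α ∈ DelSet d f ∧ adeg α = d then scl α * z α i else z α i with hz'def
    have hz'lt : ∀ α, adeg α < d → z' α = z α := by
      intro α hlt
      funext i
      simp only [hz'def]
      exact if_neg (by rintro ⟨_, h⟩; omega)
    have hz'le : ∀ α ∈ DelSet d f, ∀ i, z' α i ≤ z α i := by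
      intro α hα i
      simp only [hz'def]
      by_cases h : α ∈ DelSet d f ∧ adeg α = d
      · rw [if_pos h]
        exact mul_le_of_le_one_left ((hzδ α hα i).1) (hscl1 α hα h.2)
      · rw [if_neg h]
    have hz'feas : LwFeas d (polyG f g lam) z' := by
      refine ⟨?_, ?_, ?_⟩
      · intro α hα i
        rw [hDel] at hα
        simp only [hz'def]
        by_cases h : α ∈ DelSet d f ∧ adeg α = d
        · rw [if_pos h]
          constructor
          · exact mul_nonneg (le_of_lt (hscl_pos α hα)) (hzδ α hα i).1
          · rw [mul_eq_zero]
            constructor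
            · rintro (h1 | h1)
              · exact absurd h1 (ne_of_gt (hscl_pos α hα))
              · exact (hzδ α hα i).2.mp h1
            · intro h1
              exact Or.inr ((hzδ α hα i).2.mpr h1)
        · rw [if_neg h]
          exact hzδ α hα i
      · intro i
        rw [hDel]
        calc ∑ α ∈ DelSet d f, z' α i ≤ ∑ α ∈ DelSet d f, z α i :=
              Finset.sum_le_sum (fun α hα => hz'le α hα i)
          _ ≤ (polyG f g lam).coeff (Finsupp.single i d) := by
              have := hbudget i
              rw [hDT, hHp] at this
              exact this
      · intro α hα hd'
        rw [hDel] at hα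
        have hif : z' α = fun i => scl α * z α i := by
          funext i
          simp only [hz'def]
          exact if_pos ⟨hα, hd'⟩
        rw [hif, hcoeffG α hα]
        have hps := prod_scale (fun i => α i) (z α) (scl α)
        have hsum : ∑ i, α i = d := by rw [← hd']; rfl
        rw [hps, hsum, hscl_pow α hα]
        simp only [hQadef]
        rw [div_mul_cancel₀ _ (ne_of_gt (hPa α hα))]
    -- objective bound
    have hobj : lwObj d (polyG f g lam) z'
        ≤ ∑ α ∈ pfilter (DelTot2 d gext) (fun α => adeg α < d),
            ((d : ℝ) - (adeg α : ℝ)) *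
              (((w α / (d : ℝ)) ^ d * ∏ i, ((α i : ℝ) / z α i) ^ (α i)) ^
                ((1 : ℝ) / ((d : ℝ) - (adeg α : ℝ)))) := by
      rw [lwObj, hDel, ← hDT]
      apply Finset.sum_le_sum
      intro α hα
      rw [mem_pfilter] at hα
      obtain ⟨hαm, hαlt⟩ := hα
      rw [hDT] at hαm
      have hzz : z' α = z α := hz'lt α hαlt
      rw [hzz, hcoeffG α hαm]
      have hsub : (0:ℝ) ≤ (d : ℝ) - (adeg α : ℝ) := by
        have : (adeg α : ℝ) < (d:ℝ) := by exact_mod_cast hαlt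
        linarith
      apply mul_le_mul_of_nonneg_left _ hsub
      apply Real.rpow_le_rpow
      · apply mul_nonneg (le_of_lt (hfd α hαm))
        exact prod_div_nonneg _ _ (fun i => (hzδ α hαm i).1)
      · apply mul_le_mul_of_nonneg_right (hfw α hαm)
        exact prod_div_nonneg _ _ (fun i => (hzδ α hαm i).1)
      · positivity
    -- value chain
    have hval : c0 - lw2Obj d gext A z w mu
        ≤ eval (0 : Fin n → ℝ) (polyG f g lam) - lwObj d (polyG f g lam) z' := by
      have he : eval (0 : Fin n → ℝ) (polyG f g lam)
          = c0 - ∑ j : Fin m, mu j * eval (0 : Fin n → ℝ) (hpoly gext A j.succ) := by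
        rw [← hHp, eval0_Hpoly, hc0def]
      have hmax : ∀ j : Fin m, max (eval (0 : Fin n → ℝ) (hpoly gext A j.succ)) 0
          = eval (0 : Fin n → ℝ) (hpoly gext A j.succ) :=
        fun j => max_eq_left (hh0 j.succ (Fin.succ_ne_zero j))
      rw [lw2Obj]
      rw [Finset.sum_congr rfl (fun j _ => by rw [hmax j])]
      rw [he]
      linarith [hobj]
    calc ((c0 - lw2Obj d gext A z w mu : ℝ) : EReal)
        ≤ ((eval (0 : Fin n → ℝ) (polyG f g lam) - lwObj d (polyG f g lam) z' : ℝ) : EReal) :=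
          EReal.coe_le_coe_iff.mpr hval
      _ = ((eval (0 : Fin n → ℝ) (polyG f g lam) : ℝ) : EReal)
            - ((lwObj d (polyG f g lam) z' : ℝ) : EReal) := EReal.coe_sub _ _
      _ ≤ ((eval (0 : Fin n → ℝ) (polyG f g lam) : ℝ) : EReal) - lwRho d (polyG f g lam) := by
          apply EReal.sub_le_sub (le_refl _)
          apply sInf_le
          exact ⟨z', hz'feas, rfl⟩
      _ = lwGp d (polyG f g lam) := rfl
      _ ≤ sBound d f g := le_sSup ⟨lam, hlam0, rfl⟩
  · -- sBound ≤ fAgp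
    rw [sBound]
    apply sSup_le
    rintro b ⟨lam, hlam, rfl⟩
    simp only [Set.mem_setOf_eq] at hlam
    unfold lwGp lwRho
    apply helperL
    intro z hz
    simp only [Set.mem_setOf_eq] at hz
    obtain ⟨hziff, hbud, heq⟩ := hz
    have hDel : DelSet d (polyG f g lam) = DelSet d f :=
      DelSet_polyG hgext hdg hO hDelg lam
    have hcoeffG : ∀ α ∈ DelSet d f, (polyG f g lam).coeff α = f.coeff α := by
      intro α hα
      obtain ⟨_, _, h3, h4⟩ := hmemf α hα
      exact coeff_polyG_off hgext hdg hO hDelg lam α h3 h4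
    -- the perturbation direction
    obtain ⟨v, hv0, hvle⟩ := exists_v d (fun i j => (gext j).coeff (Finsupp.single i d))
      (fun i => hstar i)
    have hgc : ∀ (i : Fin n) (j : Fin m),
        (g j).coeff (Finsupp.single i d) = (gext j.succ).coeff (Finsupp.single i d) := by
      intro i j
      rw [hgext, Fin.cons_succ]
    set K : ℝ := ∑ j : Fin m, v j.succ * eval (0 : Fin n → ℝ) (g j) with hKdef
    apply epsLe _ K
    intro ε hε0 hε1
    set lam' : Fin (m+1) → ℝ := Fin.cons 1 (fun j => lam j + ε * v j.succ) with hlam'def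
    have hlam'0 : lam' 0 = 1 := by rw [hlam'def, Fin.cons_zero]
    have hlam's : ∀ j : Fin m, lam' j.succ = lam j + ε * v j.succ := by
      intro j
      rw [hlam'def, Fin.cons_succ]
    have hlam'nn : ∀ j, 0 ≤ lam' j := by
      intro j
      rcases Fin.eq_zero_or_eq_succ j with rfl | ⟨j', rfl⟩
      · rw [hlam'0]; norm_num
      · rw [hlam's j']
        have := hv0 j'.succ
        have := hlam j'
        nlinarith
    obtain ⟨ν, hνge, hν0, hνA⟩ := exists_solve A hAdiag hAupper hAlower lam' hlam'nn
    have hνnn : ∀ j, 0 ≤ ν j := fun j => le_trans (hlam'nn j) (hνge j)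
    set mu : Fin m → ℝ := fun j => ν j.succ with hmudef
    have hmuExt : muExt mu = ν := by
      funext j
      rcases Fin.eq_zero_or_eq_succ j with rfl | ⟨j', rfl⟩
      · rw [muExt, Fin.cons_zero, hν0, hlam'0]
      · rw [muExt, Fin.cons_succ]
    have hmu_pos : ∀ j, 0 < mu j := by
      intro j
      have h1 := hνge j.succ
      rw [hlam's j] at h1
      have := hv0 j.succ
      have := hlam j
      have : 0 < lam j + ε * v j.succ := by nlinarith
      linarith
    set lamε : Fin m → ℝ := fun j => lam j + ε * v j.succ with hlamεdef
    have hHp : Hpoly gext A mu = polyG f g lamε := by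
      rw [Hpoly_eq_polyG hgext hAdiag hAupper mu]
      congr 1
      funext j
      rw [hmuExt, hνA j.succ, hlam's j]
    have hDelε : DelSet d (polyG f g lamε) = DelSet d f :=
      DelSet_polyG hgext hdg hO hDelg lamε
    set wst : (Fin n →₀ ℕ) → ℝ := fun α => |f.coeff α| with hwstdef
    have hfeas : Lw2Feas d gext A z wst mu := by
      refine ⟨hmu_pos, ?_, ?_, ?_, ?_, ?_, ?_⟩
      · intro α hα i
        rw [hDT, ← hDel] at hα
        exact hziff α hα i
      · intro α hα
        rw [hDT] at hα
        exact abs_pos.mpr (hmemf α hα).1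
      · intro i
        rw [hDT]
        have hb := hbud i
        rw [hDel] at hb
        have hcH : (Hpoly gext A mu).coeff (Finsupp.single i d)
            = (polyG f g lam).coeff (Finsupp.single i d)
              - ε * ∑ j : Fin m, v j.succ * (gext j.succ).coeff (Finsupp.single i d) := by
          rw [hHp, coeff_polyG, coeff_polyG]
          have : ∀ j : Fin m, lamε j * (g j).coeff (Finsupp.single i d)
              = lam j * (g j).coeff (Finsupp.single i d)
                + ε * (v j.succ * (gext j.succ).coeff (Finsupp.single i d)) := by
            intro j
            rw [hlamεdef, ← hgc i j]
            ring
          rw [Finset.sum_congr rfl (fun j _ => this j), Finset.sum_add_distrib,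
            ← Finset.mul_sum]
          ring
        rw [hcH]
        have hnonpos : ∑ j : Fin m, v j.succ * (gext j.succ).coeff (Finsupp.single i d) ≤ 0 :=
          hvle i
        nlinarith [hb]
      · intro α hα hd'
        rw [hDT] at hα
        have he := heq α (by rw [hDel]; exact hα) hd'
        rw [hcoeffG α hα] at he
        rw [hwstdef]
        rw [hpowabs (f.coeff α), ← he]
      · intro α hα
        rw [hDT] at hα
        obtain ⟨_, _, h3, h4⟩ := hmemf α hα
        rw [max_Hplus_Hminus hgext hdg hO hDelg hAdiag hAupper mu α h3 h4]
      · intro j hj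
        have := hνA j
        rw [← hmuExt] at this
        rw [this]
        exact hlam'nn j
    -- value computation
    have hW : ∑ α ∈ pfilter (DelTot2 d gext) (fun α => adeg α < d),
          ((d : ℝ) - (adeg α : ℝ)) *
            (((wst α / (d : ℝ)) ^ d * ∏ i, ((α i : ℝ) / z α i) ^ (α i)) ^
              ((1 : ℝ) / ((d : ℝ) - (adeg α : ℝ))))
        = lwObj d (polyG f g lam) z := by
      rw [lwObj, hDel, ← hDT]
      apply Finset.sum_congr rfl
      intro α hα
      rw [mem_pfilter] at hα
      obtain ⟨hαm, hαlt⟩ := hα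
      rw [hDT] at hαm
      rw [hcoeffG α hαm, hwstdef, hpowabs (f.coeff α)]
    have hval : c0 - lw2Obj d gext A z wst mu
        = (eval (0 : Fin n → ℝ) (polyG f g lam) - lwObj d (polyG f g lam) z) - ε * K := by
      have hmax : ∀ j : Fin m, max (eval (0 : Fin n → ℝ) (hpoly gext A j.succ)) 0
          = eval (0 : Fin n → ℝ) (hpoly gext A j.succ) :=
        fun j => max_eq_left (hh0 j.succ (Fin.succ_ne_zero j))
      have he1 : eval (0 : Fin n → ℝ) (polyG f g lamε)
          = c0 - ∑ j : Fin m, mu j * eval (0 : Fin n → ℝ) (hpoly gext A j.succ) := by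
        rw [← hHp, eval0_Hpoly, hc0def]
      have he2 : eval (0 : Fin n → ℝ) (polyG f g lamε)
          = eval (0 : Fin n → ℝ) (polyG f g lam) - ε * K := by
        rw [eval0_polyG, eval0_polyG, hKdef]
        have : ∀ j : Fin m, lamε j * eval (0 : Fin n → ℝ) (g j)
            = lam j * eval (0 : Fin n → ℝ) (g j)
              + ε * (v j.succ * eval (0 : Fin n → ℝ) (g j)) := by
          intro j
          rw [hlamεdef]
          ring
        rw [Finset.sum_congr rfl (fun j _ => this j), Finset.sum_add_distrib,
          ← Finset.mul_sum]
        ring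
      rw [lw2Obj]
      rw [Finset.sum_congr rfl (fun j _ => by rw [hmax j])]
      rw [hW]
      have := he1.symm.trans he2
      linarith
    calc ((eval (0 : Fin n → ℝ) (polyG f g lam) - lwObj d (polyG f g lam) z - ε * K : ℝ) : EReal)
        = ((c0 - lw2Obj d gext A z wst mu : ℝ) : EReal) := by
          rw [hval]
      _ = ((c0 : ℝ) : EReal) - ((lw2Obj d gext A z wst mu : ℝ) : EReal) := EReal.coe_sub _ _
      _ ≤ ((c0 : ℝ) : EReal) - rhoA d gext A := by
          apply EReal.sub_le_sub (le_refl _)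
          apply sInf_le
          exact ⟨(z, wst, mu), hfeas, rfl⟩
      _ = fAgp d gext A := rfl
end
end

section
/- With g := (N₁^d − x₁^d, …, Nₙ^d − xₙ^d) (so m = n and K_g = ∏_{i=1}^n [−N_i, N_i]), if f_{d,i} ≤ 0 for all i = 1,…,n (in particular, whenever deg f < d), then s(f,g) = f_tr,N. -/
open MvPolynomial Finset

noncomputable section

/-- The trivial bound `f_tr,N := f(0) − ∑_{α ∈ Δ'(f)} |f_α| N^α`. -/
def ftr {n : ℕ} (N : Fin n → ℝ) (f : MvPolynomial (Fin n) ℝ) : ℝ :=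
  eval (0 : Fin n → ℝ) f -
    ∑ α ∈ pfilter f.support (fun α => α ≠ 0 ∧
        ¬ IsSquare ((monomial α (f.coeff α)) : MvPolynomial (Fin n) ℝ)),
      |f.coeff α| * ∏ i, N i ^ (α i)

lemma eval_isSquare_nonneg {n : ℕ} {p : MvPolynomial (Fin n) ℝ}
    (h : IsSquare p) (x : Fin n → ℝ) : 0 ≤ eval x p := by
  obtain ⟨q, rfl⟩ := h
  rw [map_mul]; exact mul_self_nonneg _

lemma not_isSquare_monomial {n : ℕ} (α : Fin n →₀ ℕ) {c : ℝ} (hc : c < 0) :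
    ¬ IsSquare ((monomial α c) : MvPolynomial (Fin n) ℝ) := by
  intro h
  have h2 := eval_isSquare_nonneg h (fun _ => 1)
  rw [eval_monomial] at h2
  simp only [Finsupp.prod, one_pow, Finset.prod_const_one, mul_one] at h2
  linarith

lemma amgm_aux {n : ℕ} {d : ℕ} (hd : d ≠ 0) (α : Fin n →₀ ℕ) (hs : adeg α ≤ d)
    (y : Fin n → ℝ) (hy : ∀ i, 0 ≤ y i) (t : ℝ) (ht : 0 ≤ t)
    (G : ℝ) (hG : 0 ≤ G) (hGd : G ^ d = (∏ i, y i ^ α i) * t ^ (d - adeg α)) :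
    (d : ℝ) * G ≤ (∑ i, (α i : ℝ) * y i) + ((d : ℝ) - (adeg α : ℝ)) * t := by
  have hd' : (0:ℝ) < d := by exact_mod_cast Nat.pos_of_ne_zero hd
  have hne : (d:ℝ) ≠ 0 := ne_of_gt hd'
  set s := adeg α with hsdef
  set w : Option (Fin n) → ℝ :=
    fun o => Option.elim o (((d - s : ℕ) : ℝ)/d) (fun i => (α i : ℝ)/d) with hw_def
  set Z : Option (Fin n) → ℝ := fun o => Option.elim o t y with hZ_def
  have hw : ∀ o ∈ (univ : Finset (Option (Fin n))), 0 ≤ w o := by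
    rintro (_|i) _ <;> simp only [w, Option.elim] <;> positivity
  have hZnn : ∀ o ∈ (univ : Finset (Option (Fin n))), 0 ≤ Z o := by
    rintro (_|i) _
    · exact ht
    · exact hy i
  have hsum : ∑ i, (α i : ℝ) = (s : ℝ) := by
    rw [hsdef, adeg]; push_cast; rfl
  have hw1 : ∑ o : Option (Fin n), w o = 1 := by
    rw [Fintype.sum_option]
    simp only [w, Option.elim]
    rw [← Finset.sum_div, hsum, Nat.cast_sub hs]
    field_simp
    ring
  have hP : (∏ o : Option (Fin n), Z o ^ w o) = G := by
    have hPnn : 0 ≤ ∏ o : Option (Fin n), Z o ^ w o :=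
      Finset.prod_nonneg fun o ho => Real.rpow_nonneg (hZnn o ho) _
    refine (pow_left_inj₀ hPnn hG hd).mp ?_
    rw [hGd, ← Finset.prod_pow, Fintype.prod_option]
    have hnone : (Z none ^ w none) ^ d = t ^ (d - s) := by
      simp only [w, Z, Option.elim]
      rw [← Real.rpow_natCast (t ^ (((d-s:ℕ):ℝ)/d)) d, ← Real.rpow_mul ht,
        div_mul_cancel₀ _ hne, Real.rpow_natCast]
    have hsome : ∀ i, (Z (some i) ^ w (some i)) ^ d = y i ^ (α i) := fun i => by
      simp only [w, Z, Option.elim]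
      rw [← Real.rpow_natCast (y i ^ ((α i:ℝ)/d)) d, ← Real.rpow_mul (hy i),
        div_mul_cancel₀ _ hne, Real.rpow_natCast]
    rw [hnone, Finset.prod_congr rfl (fun i _ => hsome i)]
    ring
  have key := Real.geom_mean_le_arith_mean_weighted univ w Z hw hw1 hZnn
  rw [hP, Fintype.sum_option] at key
  have expand : (d:ℝ) * (w none * Z none + ∑ i, w (some i) * Z (some i))
      = ((d:ℝ) - (s:ℝ)) * t + ∑ i, (α i : ℝ) * y i := by
    simp only [w, Z, Option.elim]
    rw [mul_add, Finset.mul_sum, Nat.cast_sub hs]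
    congr 1
    · field_simp
    · exact Finset.sum_congr rfl fun i _ => by field_simp
  have h2 := mul_le_mul_of_nonneg_left key hd'.le
  rw [expand] at h2
  linarith

/-- With `gᵢ := Nᵢ^d − xᵢ^d`, if `f_{d,i} ≤ 0` for all `i`, then `s(f,g) = f_tr,N`. -/
theorem stmt16 {n : ℕ} (hn : 1 ≤ n) (d : ℕ) (hd2 : 2 ≤ d) (hde : Even d)
    (f : MvPolynomial (Fin n) ℝ) (hdf : f.totalDegree ≤ d)
    (hfd : ∀ i : Fin n, f.coeff (Finsupp.single i d) ≤ 0)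
    (N : Fin n → ℝ) (hN : ∀ i, 0 < N i)
    (g : Fin n → MvPolynomial (Fin n) ℝ) (hg : ∀ i, g i = C (N i ^ d) - X i ^ d) :
    sBound d f g = ((ftr N f : ℝ) : EReal) := by
  classical
  have hd0 : d ≠ 0 := by omega
  have hdR : (0:ℝ) < d := by exact_mod_cast Nat.pos_of_ne_zero hd0
  have hdRne : (d:ℝ) ≠ 0 := ne_of_gt hdR
  -- degree bound on the support of f
  have hsuppf : ∀ α ∈ f.support, adeg α ≤ d := by
    intro α hα
    have h1 := MvPolynomial.le_totalDegree hα
    have h2 : adeg α = α.sum fun _ e => e := by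
      rw [adeg, Finsupp.sum_fintype]; intro _; rfl
    omega
  -- coefficients of polyG
  have hco : ∀ (lam : Fin n → ℝ) α, (polyG f g lam).coeff α =
      f.coeff α - (∑ j, lam j * (if 0 = α then N j ^ d else 0))
        + ∑ j, (if Finsupp.single j d = α then lam j else 0) := by
    intro lam α
    rw [polyG, MvPolynomial.coeff_sub, MvPolynomial.coeff_sum]
    have h1 : ∀ j ∈ (univ : Finset (Fin n)), ((C (lam j) : MvPolynomial (Fin n) ℝ) * g j).coeff α
        = lam j * (if 0 = α then N j ^ d else 0) - (if Finsupp.single j d = α then lam j else 0) := by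
      intro j _
      rw [MvPolynomial.coeff_C_mul, hg j, MvPolynomial.coeff_sub, MvPolynomial.coeff_C,
        MvPolynomial.coeff_X_pow]
      split_ifs <;> ring
    rw [Finset.sum_congr rfl h1, Finset.sum_sub_distrib]
    ring
  have hco_mid : ∀ (lam : Fin n → ℝ) α, α ≠ 0 → (∀ j, α ≠ Finsupp.single j d) →
      (polyG f g lam).coeff α = f.coeff α := by
    intro lam α h0 hne
    rw [hco lam α]
    have e1 : (∑ j, lam j * (if 0 = α then N j ^ d else 0)) = 0 :=
      Finset.sum_eq_zero fun j _ => by rw [if_neg (fun h => h0 h.symm), mul_zero]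
    have e2 : (∑ j, (if Finsupp.single j d = α then lam j else 0)) = 0 :=
      Finset.sum_eq_zero fun j _ => if_neg fun h => hne j h.symm
    rw [e1, e2]; ring
  have hco_eps : ∀ (lam : Fin n → ℝ) i, (polyG f g lam).coeff (Finsupp.single i d)
      = f.coeff (Finsupp.single i d) + lam i := by
    intro lam i
    rw [hco lam _]
    have h0 : (Finsupp.single i d : Fin n →₀ ℕ) ≠ 0 := by
      simp [Finsupp.single_eq_zero, hd0]
    have e1 : (∑ j, lam j * (if 0 = (Finsupp.single i d : Fin n →₀ ℕ) then N j ^ d else 0)) = 0 :=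
      Finset.sum_eq_zero fun j _ => by rw [if_neg (fun h => h0 h.symm), mul_zero]
    have e2 : (∑ j, (if (Finsupp.single j d : Fin n →₀ ℕ) = Finsupp.single i d
        then lam j else 0)) = lam i := by
      rw [Finset.sum_eq_single i
        (fun j _ hj => if_neg (fun h => hj ((Finsupp.single_left_inj hd0).mp h)))
        (fun h => absurd (Finset.mem_univ i) h), if_pos rfl]
    rw [e1, e2]; ring
  have heval : ∀ lam : Fin n → ℝ, eval (0 : Fin n → ℝ) (polyG f g lam)
      = eval (0 : Fin n → ℝ) f - ∑ j, lam j * N j ^ d := by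
    intro lam
    rw [polyG, map_sub, map_sum]
    congr 1
    refine Finset.sum_congr rfl fun j _ => ?_
    rw [map_mul, eval_C, hg j, map_sub, eval_C, map_pow, eval_X]
    simp [zero_pow hd0]
  -- the index sets
  set T : Finset (Fin n →₀ ℕ) := pfilter f.support (fun α => α ≠ 0 ∧
      ¬ IsSquare ((monomial α (f.coeff α)) : MvPolynomial (Fin n) ℝ)) with hT
  set Del : Finset (Fin n →₀ ℕ) :=
    pfilter T (fun α => ∀ i, α ≠ Finsupp.single i d) with hDelDef
  have hmemT : ∀ α, α ∈ T ↔ f.coeff α ≠ 0 ∧ α ≠ 0 ∧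
      ¬ IsSquare ((monomial α (f.coeff α)) : MvPolynomial (Fin n) ℝ) := by
    intro α
    simp [hT, pfilter, Finset.mem_filter, MvPolynomial.mem_support_iff, and_assoc]
  have hmemDel : ∀ α, α ∈ Del ↔ (f.coeff α ≠ 0 ∧ α ≠ 0 ∧
      ¬ IsSquare ((monomial α (f.coeff α)) : MvPolynomial (Fin n) ℝ)) ∧
      ∀ i, α ≠ Finsupp.single i d := by
    intro α
    simp only [hDelDef, pfilter, Finset.mem_filter]
    rw [hmemT]
  have hDel : ∀ lam : Fin n → ℝ, DelSet d (polyG f g lam) = Del := by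
    intro lam
    ext α
    rw [hmemDel]
    simp only [DelSet, OmegaSet, pfilter, Finset.mem_filter, MvPolynomial.mem_support_iff]
    constructor
    · rintro ⟨⟨hne, _, h0, hεne⟩, hsq⟩
      rw [hco_mid lam α h0 hεne] at hne hsq
      exact ⟨⟨hne, h0, hsq⟩, hεne⟩
    · rintro ⟨⟨hne, h0, hsq⟩, hεne⟩
      have hc := hco_mid lam α h0 hεne
      exact ⟨⟨by rw [hc]; exact hne,
        hsuppf α (MvPolynomial.mem_support_iff.mpr hne), h0, hεne⟩, by rw [hc]; exact hsq⟩
  have hDelco : ∀ (lam : Fin n → ℝ), ∀ α ∈ Del, (polyG f g lam).coeff α = f.coeff α := by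
    intro lam α hα
    rw [hmemDel] at hα
    exact hco_mid lam α hα.1.2.1 hα.2
  have hDeldeg : ∀ α ∈ Del, adeg α ≤ d := by
    intro α hα
    rw [hmemDel] at hα
    exact hsuppf α (MvPolynomial.mem_support_iff.mpr hα.1.1)
  -- the quantity A α
  set A : (Fin n →₀ ℕ) → ℝ := fun α => |f.coeff α| * ∏ i, N i ^ α i with hA
  have hNprod_pos : ∀ α : Fin n →₀ ℕ, 0 < ∏ i, N i ^ α i := fun α =>
    Finset.prod_pos fun i _ => pow_pos (hN i) _
  have hApos : ∀ α ∈ Del, 0 < A α := by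
    intro α hα
    rw [hmemDel] at hα
    exact mul_pos (abs_pos.mpr hα.1.1) (hNprod_pos α)
  have hAnn : ∀ α, 0 ≤ A α := fun α =>
    mul_nonneg (abs_nonneg _) (hNprod_pos α).le
  have hNpow : ∀ i, (∏ j, N j ^ (Finsupp.single i d) j) = N i ^ d := by
    intro i
    rw [Finset.prod_eq_single i
      (fun j _ hj => by rw [Finsupp.single_apply, if_neg (Ne.symm hj), pow_zero])
      (fun h => absurd (Finset.mem_univ i) h), Finsupp.single_apply, if_pos rfl]
  have hftr : ftr N f = eval (0 : Fin n → ℝ) f - ∑ α ∈ T, A α := rfl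
  -- split the sum over T
  have habs : ∀ α : Fin n →₀ ℕ,
      (f.coeff α / (d:ℝ))^d * (∏ i, N i ^ α i)^d = (A α / (d:ℝ))^d := by
    intro α
    have h1 : A α = |f.coeff α * ∏ i, N i ^ α i| := by
      simp only [hA]
      rw [abs_mul, abs_of_pos (hNprod_pos α)]
    rw [h1, div_pow, div_pow, Even.pow_abs hde, mul_pow]
    ring
  have hTsplit : ∑ α ∈ T, A α = ∑ α ∈ Del, A α
      + ∑ i, (- f.coeff (Finsupp.single i d)) * N i ^ d := by
    have hE : T = Del ∪ Finset.image (fun i => Finsupp.single i d)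
        (univ.filter (fun i => f.coeff (Finsupp.single i d) ≠ 0)) := by
      ext α
      simp only [Finset.mem_union, Finset.mem_image, Finset.mem_filter, Finset.mem_univ, true_and,
        hmemT, hmemDel]
      constructor
      · rintro ⟨h1, h2, h3⟩
        by_cases hc : ∀ i, α ≠ Finsupp.single i d
        · exact Or.inl ⟨⟨h1, h2, h3⟩, hc⟩
        · push_neg at hc
          obtain ⟨i, hi⟩ := hc
          subst hi
          exact Or.inr ⟨i, h1, rfl⟩
      · rintro (⟨h, _⟩ | ⟨i, hne, rfl⟩)
        · exact h
        · refine ⟨hne, ?_, not_isSquare_monomial _ (lt_of_le_of_ne (hfd i) hne)⟩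
          simp [Finsupp.single_eq_zero, hd0]
    have hdisj : Disjoint Del (Finset.image (fun i => Finsupp.single i d)
        (univ.filter (fun i => f.coeff (Finsupp.single i d) ≠ 0))) := by
      rw [Finset.disjoint_right]
      intro α hα hαD
      rw [hmemDel] at hαD
      obtain ⟨i, -, rfl⟩ := Finset.mem_image.mp hα
      exact hαD.2 i rfl
    rw [hE, Finset.sum_union hdisj]
    congr 1
    rw [Finset.sum_image (fun i _ j _ h => (Finsupp.single_left_inj hd0).mp h),
      Finset.sum_filter]
    refine Finset.sum_congr rfl fun i _ => ?_
    by_cases hc : f.coeff (Finsupp.single i d) = 0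
    · simp [hc]
    · rw [if_pos hc]
      simp only [hA]
      rw [hNpow i, abs_of_neg (lt_of_le_of_ne (hfd i) hc)]
  -- lower bound for the objective over the feasible set
  have hlow : ∀ lam : Fin n → ℝ, (∀ j, 0 ≤ lam j) → ∀ z, LwFeas d (polyG f g lam) z →
      ∑ α ∈ T, A α - ∑ j, lam j * N j ^ d ≤ lwObj d (polyG f g lam) z := by
    intro lam hlam z hz
    rw [LwFeas, hDel lam] at hz
    obtain ⟨hz1, hz2, hz3⟩ := hz
    have claim : ∀ α ∈ Del, A α ≤ (∑ i, z α i * N i ^ d)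
        + (if adeg α < d then ((d:ℝ) - (adeg α:ℝ)) *
            ((((polyG f g lam).coeff α / (d:ℝ)) ^ d * ∏ i, ((α i:ℝ) / z α i) ^ (α i)) ^
              ((1:ℝ) / ((d:ℝ) - (adeg α:ℝ)))) else 0) := by
      intro α hα
      have hzal := hz1 α hα
      have hαd := hDeldeg α hα
      have hcoα := hDelco lam α hα
      have hGnn : 0 ≤ A α / d := div_nonneg (hAnn α) hdR.le
      have hAd : (d:ℝ) * (A α / d) = A α := by field_simp
      set y : Fin n → ℝ := fun i => z α i * N i ^ d / (α i : ℝ) with hy_def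
      have hynn : ∀ i, 0 ≤ y i := fun i => by
        have h1 := (hzal i).1
        have h2 := (hN i)
        simp only [hy_def]
        positivity
      have hsum_y : ∑ i, (α i:ℝ) * y i = ∑ i, z α i * N i ^ d := by
        refine Finset.sum_congr rfl fun i _ => ?_
        rcases eq_or_ne (α i) 0 with h|h
        · rw [h, (hzal i).2.mpr h]
          simp
        · simp only [hy_def]
          field_simp
      have hyprod : ∏ i, y i ^ α i
          = (∏ i, (z α i / (α i:ℝ)) ^ α i) * (∏ i, N i ^ α i) ^ d := by
        rw [← Finset.prod_pow, ← Finset.prod_mul_distrib]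
        refine Finset.prod_congr rfl fun i _ => ?_
        simp only [hy_def]
        rw [mul_div_right_comm, mul_pow, ← pow_mul, mul_comm d (α i), pow_mul]
      have hinv : (∏ i, (z α i / (α i:ℝ)) ^ α i) * (∏ i, ((α i:ℝ) / z α i) ^ α i) = 1 := by
        rw [← Finset.prod_mul_distrib]
        refine Finset.prod_eq_one fun i _ => ?_
        rcases eq_or_ne (α i) 0 with h|h
        · rw [h, pow_zero, pow_zero, one_mul]
        · have hzne : z α i ≠ 0 := fun hh => h ((hzal i).2.mp hh)
          rw [← mul_pow, div_mul_div_comm, mul_comm (z α i) ((α i:ℝ)),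
            div_self (mul_ne_zero (Nat.cast_ne_zero.mpr h) hzne), one_pow]
      rcases lt_or_eq_of_le hαd with hlt | heq
      · rw [if_pos hlt]
        have hk0 : d - adeg α ≠ 0 := by omega
        set B : ℝ := ((polyG f g lam).coeff α / (d:ℝ)) ^ d
            * ∏ i, ((α i:ℝ) / z α i) ^ (α i) with hB
        have hBnn : 0 ≤ B := by
          refine mul_nonneg (hde.pow_nonneg _)
            (Finset.prod_nonneg fun i _ => pow_nonneg (div_nonneg (Nat.cast_nonneg _)
              (hzal i).1) _)
        set t : ℝ := B ^ ((1:ℝ)/((d:ℝ) - (adeg α:ℝ))) with ht_def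
        have htnn : 0 ≤ t := Real.rpow_nonneg hBnn _
        have htpow : t ^ (d - adeg α) = B := by
          rw [ht_def, show (1:ℝ)/((d:ℝ) - (adeg α:ℝ)) = (((d - adeg α : ℕ):ℝ))⁻¹ by
            rw [Nat.cast_sub hαd, one_div]]
          exact Real.rpow_inv_natCast_pow hBnn hk0
        have hGd : (A α / d) ^ d = (∏ i, y i ^ α i) * t ^ (d - adeg α) := by
          rw [htpow, hyprod, hB, hcoα, ← habs α]
          linear_combination (-((f.coeff α / (d:ℝ))^d * (∏ i, N i ^ α i)^d)) * hinv
        have hfin := amgm_aux hd0 α hαd y hynn t htnn (A α / d) hGnn hGd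
        rw [hsum_y, hAd] at hfin
        exact hfin
      · rw [if_neg (by omega), add_zero]
        have hGd : (A α / d) ^ d = (∏ i, y i ^ α i) * (0:ℝ) ^ (d - adeg α) := by
          rw [heq, Nat.sub_self, pow_zero, mul_one, hyprod, hz3 α hα heq, hcoα]
          exact (habs α).symm
        have hfin := amgm_aux hd0 α hαd y hynn 0 le_rfl (A α / d) hGnn hGd
        rw [hsum_y, hAd, mul_zero, add_zero] at hfin
        exact hfin
    have hobjz : lwObj d (polyG f g lam) z = ∑ α ∈ Del,
        (if adeg α < d then ((d:ℝ) - (adeg α:ℝ)) *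
            ((((polyG f g lam).coeff α / (d:ℝ)) ^ d * ∏ i, ((α i:ℝ) / z α i) ^ (α i)) ^
              ((1:ℝ) / ((d:ℝ) - (adeg α:ℝ)))) else 0) := by
      simp only [lwObj, pfilter, hDel lam]
      rw [Finset.sum_filter]
      exact Finset.sum_congr rfl fun α _ => by split_ifs <;> rfl
    have hsumclaim : ∑ α ∈ Del, A α
        ≤ (∑ α ∈ Del, ∑ i, z α i * N i ^ d) + lwObj d (polyG f g lam) z := by
      rw [hobjz, ← Finset.sum_add_distrib]
      exact Finset.sum_le_sum claim
    have hzsum : ∑ α ∈ Del, ∑ i, z α i * N i ^ d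
        ≤ ∑ j, lam j * N j ^ d - ∑ i, (- f.coeff (Finsupp.single i d)) * N i ^ d := by
      rw [Finset.sum_comm]
      have h1 : ∀ i ∈ (univ : Finset (Fin n)), ∑ α ∈ Del, z α i * N i ^ d
          ≤ (f.coeff (Finsupp.single i d) + lam i) * N i ^ d := by
        intro i _
        rw [← Finset.sum_mul]
        have h2 := hz2 i
        rw [hco_eps lam i] at h2
        exact mul_le_mul_of_nonneg_right h2 (pow_nonneg (hN i).le d)
      calc ∑ i, ∑ α ∈ Del, z α i * N i ^ d
          ≤ ∑ i, (f.coeff (Finsupp.single i d) + lam i) * N i ^ d := Finset.sum_le_sum h1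
        _ = ∑ j, lam j * N j ^ d - ∑ i, (- f.coeff (Finsupp.single i d)) * N i ^ d := by
            rw [← Finset.sum_sub_distrib]
            exact Finset.sum_congr rfl fun i _ => by ring
    rw [hTsplit]
    linarith
  have hrho_low : ∀ lam : Fin n → ℝ, (∀ j, 0 ≤ lam j) →
      ((∑ α ∈ T, A α - ∑ j, lam j * N j ^ d : ℝ) : EReal) ≤ lwRho d (polyG f g lam) := by
    intro lam hlam
    refine le_sInf ?_
    rintro x ⟨z, hz, rfl⟩
    exact EReal.coe_le_coe_iff.mpr (hlow lam hlam z hz)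
  have hgp_le : ∀ lam : Fin n → ℝ, (∀ j, 0 ≤ lam j) →
      lwGp d (polyG f g lam) ≤ ((ftr N f : ℝ) : EReal) := by
    intro lam hlam
    rw [lwGp, heval lam]
    calc ((eval (0 : Fin n → ℝ) f - ∑ j, lam j * N j ^ d : ℝ) : EReal) - lwRho d (polyG f g lam)
        ≤ ((eval (0 : Fin n → ℝ) f - ∑ j, lam j * N j ^ d : ℝ) : EReal)
          - ((∑ α ∈ T, A α - ∑ j, lam j * N j ^ d : ℝ) : EReal) :=
          EReal.sub_le_sub le_rfl (hrho_low lam hlam)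
      _ = ((ftr N f : ℝ) : EReal) := by
          rw [← EReal.coe_sub, hftr]
          norm_num
  -- the optimal choice
  set z' : (Fin n →₀ ℕ) → Fin n → ℝ := fun α i => A α * (α i : ℝ) / (d * N i ^ d) with hz'
  set lam' : Fin n → ℝ :=
    fun i => (∑ α ∈ Del, z' α i) - f.coeff (Finsupp.single i d) with hlam'
  have hz'nn : ∀ α i, 0 ≤ z' α i := by
    intro α i
    rw [hz']
    have := hAnn α
    have := (hN i)
    positivity
  have hlam'nn : ∀ j, 0 ≤ lam' j := by
    intro j
    rw [hlam']
    have h1 : 0 ≤ ∑ α ∈ Del, z' α j := Finset.sum_nonneg fun α _ => hz'nn α j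
    have := hfd j
    simp only [sub_nonneg]
    linarith
  have hdivz : ∀ α ∈ Del, ∀ i : Fin n, α i ≠ 0 →
      z' α i / (α i:ℝ) = A α / ((d:ℝ) * N i ^ d) := by
    intro α hα i hi
    have h1 : ((α i : ℕ):ℝ) ≠ 0 := Nat.cast_ne_zero.mpr hi
    have h2 : (d:ℝ) * N i ^ d ≠ 0 := mul_ne_zero hdRne (pow_ne_zero _ (hN i).ne')
    simp only [hz']
    field_simp
  have hdivz2 : ∀ α ∈ Del, ∀ i : Fin n, α i ≠ 0 →
      (α i:ℝ) / z' α i = ((d:ℝ) * N i ^ d) / A α := by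
    intro α hα i hi
    have h1 : ((α i : ℕ):ℝ) ≠ 0 := Nat.cast_ne_zero.mpr hi
    have h2 : (d:ℝ) * N i ^ d ≠ 0 := mul_ne_zero hdRne (pow_ne_zero _ (hN i).ne')
    have h3 : A α ≠ 0 := (hApos α hα).ne'
    simp only [hz']
    rw [div_div_eq_mul_div]
    field_simp
  have hprod1 : ∀ α ∈ Del, ∏ i, (z' α i / (α i:ℝ))^(α i)
      = (A α / d)^(adeg α) / (∏ i, N i ^ α i)^d := by
    intro α hα
    have e1 : ∀ i ∈ (univ : Finset (Fin n)), (z' α i / (α i:ℝ))^(α i)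
        = (A α/(d:ℝ))^(α i) / ((N i ^ (α i)))^d := by
      intro i _
      rcases eq_or_ne (α i) 0 with h|h
      · rw [h]
        simp
      · rw [hdivz α hα i h, ← div_div, div_pow, ← pow_mul, mul_comm d (α i), pow_mul]
    rw [Finset.prod_congr rfl e1, Finset.prod_div_distrib, Finset.prod_pow_eq_pow_sum,
      Finset.prod_pow]
    rfl
  have hprod2 : ∀ α ∈ Del, ∏ i, ((α i:ℝ)/z' α i)^(α i)
      = ((d:ℝ)/A α)^(adeg α) * (∏ i, N i ^ α i)^d := by
    intro α hα
    have e1 : ∀ i ∈ (univ : Finset (Fin n)), ((α i:ℝ)/z' α i)^(α i)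
        = ((d:ℝ)/A α)^(α i) * ((N i ^ (α i)))^d := by
      intro i _
      rcases eq_or_ne (α i) 0 with h|h
      · rw [h]
        simp
      · rw [hdivz2 α hα i h, mul_div_right_comm, mul_pow, ← pow_mul, mul_comm d (α i), pow_mul]
    rw [Finset.prod_congr rfl e1, Finset.prod_mul_distrib, Finset.prod_pow_eq_pow_sum,
      Finset.prod_pow]
    rfl
  have hfeas : LwFeas d (polyG f g lam') z' := by
    rw [LwFeas, hDel lam']
    refine ⟨?_, ?_, ?_⟩
    · intro α hα i
      refine ⟨hz'nn α i, ?_, ?_⟩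
      · intro h
        simp only [hz'] at h
        rcases div_eq_zero_iff.mp h with h' | h'
        · rcases mul_eq_zero.mp h' with h'' | h''
          · exact absurd h'' (hApos α hα).ne'
          · exact_mod_cast h''
        · exact absurd h' (mul_ne_zero hdRne (pow_ne_zero _ (hN i).ne'))
      · intro h
        simp only [hz', h]
        simp
    · intro i
      rw [hco_eps lam' i]
      simp only [hlam']
      exact le_of_eq (by ring)
    · intro α hα hdeg
      rw [hprod1 α hα, hdeg, hDelco lam' α hα,
        div_eq_iff (pow_ne_zero _ (hNprod_pos α).ne')]
      exact (habs α).symm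
  have hzNsum : ∀ α ∈ Del, ∑ i, z' α i * N i ^ d = (adeg α:ℝ) * (A α / d) := by
    intro α hα
    have e : ∀ i ∈ (univ : Finset (Fin n)), z' α i * N i ^ d = (α i:ℝ) * (A α / d) := by
      intro i _
      have h2 : N i ^ d ≠ 0 := pow_ne_zero _ (hN i).ne'
      simp only [hz']
      field_simp
    rw [Finset.sum_congr rfl e, ← Finset.sum_mul]
    congr 1
    rw [adeg]
    push_cast
    rfl
  have hobj : lwObj d (polyG f g lam') z'
      = ∑ α ∈ T, A α - ∑ j, lam' j * N j ^ d := by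
    have h1 : lwObj d (polyG f g lam') z'
        = ∑ α ∈ Del, (if adeg α < d then ((d:ℝ) - (adeg α:ℝ)) * (A α / d) else 0) := by
      simp only [lwObj, pfilter, hDel lam']
      rw [Finset.sum_filter]
      refine Finset.sum_congr rfl fun α hα => ?_
      split_ifs with h
      · have hANe : A α ≠ 0 := (hApos α hα).ne'
        have hk0 : d - adeg α ≠ 0 := by omega
        congr 1
        have hbase : ((polyG f g lam').coeff α / (d:ℝ)) ^ d * ∏ i, ((α i:ℝ) / z' α i) ^ (α i)
            = (A α / d) ^ (d - adeg α) := by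
          rw [hDelco lam' α hα, hprod2 α hα]
          have he : (f.coeff α / (d:ℝ))^d = (A α/(d:ℝ))^(d - adeg α) * (A α/(d:ℝ))^(adeg α)
              / (∏ i, N i ^ α i)^d := by
            rw [← pow_add, show d - adeg α + adeg α = d from by omega,
              eq_div_iff (pow_ne_zero _ (hNprod_pos α).ne')]
            exact habs α
          rw [he]
          have h2 : ((A α/(d:ℝ)) * ((d:ℝ)/A α))^(adeg α) = 1 := by
            rw [div_mul_div_comm, mul_comm (A α) ((d:ℝ)),
              div_self (mul_ne_zero hdRne hANe), one_pow]
          calc (A α/(d:ℝ))^(d - adeg α) * (A α/(d:ℝ))^(adeg α) / (∏ i, N i ^ α i)^d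
              * (((d:ℝ)/A α)^(adeg α) * (∏ i, N i ^ α i)^d)
              = (A α/(d:ℝ))^(d - adeg α) * (((A α/(d:ℝ)) * ((d:ℝ)/A α))^(adeg α))
                * ((∏ i, N i ^ α i)^d / (∏ i, N i ^ α i)^d) := by
                rw [mul_pow]
                ring
            _ = (A α/(d:ℝ))^(d - adeg α) := by
                rw [h2, div_self (pow_ne_zero _ (hNprod_pos α).ne'), mul_one, mul_one]
        rw [hbase, show (1:ℝ)/((d:ℝ) - (adeg α:ℝ)) = (((d - adeg α:ℕ)):ℝ)⁻¹ from by
          rw [Nat.cast_sub (hDeldeg α hα), one_div],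
          Real.pow_rpow_inv_natCast (div_nonneg (hAnn α) hdR.le) hk0]
      · rfl
    have h2 : ∑ j, lam' j * N j ^ d = (∑ α ∈ Del, (adeg α:ℝ) * (A α / d))
        + ∑ i, (- f.coeff (Finsupp.single i d)) * N i ^ d := by
      simp only [hlam']
      have e : ∀ j ∈ (univ : Finset (Fin n)),
          ((∑ α ∈ Del, z' α j) - f.coeff (Finsupp.single j d)) * N j ^ d
          = (∑ α ∈ Del, z' α j * N j ^ d) + (- f.coeff (Finsupp.single j d)) * N j ^ d := by
        intro j _
        rw [sub_mul, Finset.sum_mul]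
        ring
      rw [Finset.sum_congr rfl e, Finset.sum_add_distrib]
      congr 1
      rw [Finset.sum_comm]
      exact Finset.sum_congr rfl fun α hα => hzNsum α hα
    have e3 : ∀ α ∈ Del, (if adeg α < d then ((d:ℝ) - (adeg α:ℝ)) * (A α / d) else 0)
        = A α - (adeg α:ℝ) * (A α / d) := by
      intro α hα
      rcases lt_or_eq_of_le (hDeldeg α hα) with h|h
      · rw [if_pos h]
        field_simp
      · rw [if_neg (by omega), h]
        field_simp
        ring
    rw [h1, h2, hTsplit, Finset.sum_congr rfl e3, Finset.sum_sub_distrib]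
    ring
  have hrho_eq : lwRho d (polyG f g lam')
      = ((∑ α ∈ T, A α - ∑ j, lam' j * N j ^ d : ℝ) : EReal) := by
    refine le_antisymm ?_ (hrho_low lam' hlam'nn)
    rw [← hobj]
    exact sInf_le ⟨z', hfeas, rfl⟩
  have hgp_eq : lwGp d (polyG f g lam') = ((ftr N f : ℝ) : EReal) := by
    rw [lwGp, heval lam', hrho_eq, ← EReal.coe_sub, hftr]
    norm_num
  refine le_antisymm ?_ ?_
  · refine sSup_le ?_
    rintro x ⟨lam, hlam, rfl⟩
    exact hgp_le lam hlam
  · rw [← hgp_eq]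
    exact le_sSup ⟨lam', hlam'nn, rfl⟩
end
end

section
/- Let α ∈ ℕⁿ with α_i > 0 for every i = 1,…,n and |α| < d, and let c ∈ ℝ with c ≠ 0. Then for every z = (z₁,…,zₙ) ∈ (0,∞)ⁿ, ∑_{i=1}^n z_i + (d−|α|)·[(|c|/d)^d · ∏_{i=1}^n (α_i/z_i)^{α_i}]^{1/(d−|α|)} ≥ |c|, and equality holds at z_i = α_i·|c|/d for all i. In other words, the minimum value of this function on (0,∞)ⁿ is |c|, attained at z_i = α_i·|c|/d. -/
open MvPolynomial Finset

noncomputable section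


/-- Lemma (1): for `α` with all `αᵢ > 0` and `|α| < d`, the minimum over `(0,∞)ⁿ` of
`∑ zᵢ + (d−|α|)·[(|c|/d)^d ∏ (αᵢ/zᵢ)^{αᵢ}]^{1/(d−|α|)}` is `|c|`,
attained at `zᵢ = αᵢ|c|/d`. -/
theorem stmt17 {n : ℕ} (d : ℕ) (hd2 : 2 ≤ d) (hde : Even d)
    (α : Fin n → ℕ) (hα : ∀ i, 0 < α i) (hαd : ∑ i, α i < d)
    (c : ℝ) (hc : c ≠ 0) :
    (∀ z : Fin n → ℝ, (∀ i, 0 < z i) →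
      |c| ≤ ∑ i, z i + ((d : ℝ) - ((∑ i, α i : ℕ) : ℝ)) *
        (((|c| / (d : ℝ)) ^ d * ∏ i, ((α i : ℝ) / z i) ^ (α i)) ^
          ((1 : ℝ) / ((d : ℝ) - ((∑ i, α i : ℕ) : ℝ)))) ) ∧
    (∑ i, ((α i : ℝ) * |c| / (d : ℝ))) + ((d : ℝ) - ((∑ i, α i : ℕ) : ℝ)) *
        (((|c| / (d : ℝ)) ^ d *
            ∏ i, ((α i : ℝ) / ((α i : ℝ) * |c| / (d : ℝ))) ^ (α i)) ^
          ((1 : ℝ) / ((d : ℝ) - ((∑ i, α i : ℕ) : ℝ)))) = |c| := by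
  have hc0 : (0:ℝ) < |c| := abs_pos.mpr hc
  have hd0 : (0:ℝ) < (d:ℝ) := by positivity
  set s : ℕ := ∑ i, α i with hs
  set k : ℕ := d - s with hkdef
  have hk : 0 < k := Nat.sub_pos_of_lt hαd
  have hkc : ((k:ℝ)) = (d:ℝ) - (s:ℝ) := by
    rw [hkdef, Nat.cast_sub hαd.le]
  have hks : (k:ℝ) + (s:ℝ) = (d:ℝ) := by rw [hkc]; ring
  have hk0 : (0:ℝ) < (k:ℝ) := by exact_mod_cast hk
  have ht : (0:ℝ) < |c| / d := by positivity
  constructor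
  · -- the inequality, via weighted AM-GM
    intro z hz
    rw [← hkc]
    set P : ℝ := (|c| / (d : ℝ)) ^ d * ∏ i, ((α i : ℝ) / z i) ^ (α i) with hP
    have hP0 : 0 < P := by
      apply mul_pos (by positivity)
      apply Finset.prod_pos
      intro i _
      have := hα i
      have := hz i
      positivity
    set Q : ℝ := P ^ ((1:ℝ) / (k:ℝ)) with hQ
    have hQ0 : 0 < Q := Real.rpow_pos_of_pos hP0 _
    -- weights and points on Option (Fin n)
    set w : Option (Fin n) → ℝ := fun o => o.elim ((k:ℝ)/(d:ℝ)) (fun i => (α i : ℝ)/(d:ℝ)) with hw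
    set p : Option (Fin n) → ℝ := fun o => o.elim ((d:ℝ) * Q) (fun i => (d:ℝ) * z i / (α i : ℝ)) with hp
    have hwpos : ∀ o, 0 ≤ w o := by
      rintro (_|i)
      · exact div_nonneg hk0.le hd0.le
      · exact div_nonneg (Nat.cast_nonneg _) hd0.le
    have hppos : ∀ o, 0 < p o := by
      rintro (_|i)
      · simp only [hp, Option.elim]; positivity
      · have h1 := hα i
        have h2 := hz i
        simp only [hp, Option.elim]
        have : (0:ℝ) < (α i : ℝ) := by exact_mod_cast h1
        positivity
    have hw1 : ∑ o : Option (Fin n), w o = 1 := by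
      rw [Fintype.sum_option]
      simp only [hw, Option.elim]
      rw [← Finset.sum_div, ← Nat.cast_sum, ← hs, ← add_div, hks, div_self hd0.ne']
    have key := Real.geom_mean_le_arith_mean_weighted Finset.univ w p
      (fun o _ => hwpos o) hw1 (fun o _ => (hppos o).le)
    -- compute RHS of AM-GM
    have hrhs : ∑ o : Option (Fin n), w o * p o = ∑ i, z i + (k:ℝ) * Q := by
      rw [Fintype.sum_option]
      simp only [hw, hp, Option.elim]
      have h1 : (k:ℝ)/(d:ℝ) * ((d:ℝ) * Q) = (k:ℝ) * Q := by
        field_simp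
      have h2 : ∀ i, (α i : ℝ)/(d:ℝ) * ((d:ℝ) * z i / (α i : ℝ)) = z i := by
        intro i
        have : ((α i : ℝ)) ≠ 0 := by exact_mod_cast (hα i).ne'
        field_simp
      rw [h1]
      rw [Finset.sum_congr rfl (fun i _ => h2 i)]
      ring
    -- compute LHS of AM-GM : it equals |c|
    set X : ℝ := ∏ o : Option (Fin n), p o ^ w o with hX
    have hX0 : 0 ≤ X := Finset.prod_nonneg fun o _ => Real.rpow_nonneg (hppos o).le _
    have hXd : X ^ d = |c| ^ d := by
      have hXd' : X ^ d = ∏ o : Option (Fin n), p o ^ (w o * d) := by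
        rw [hX, ← Finset.prod_pow]
        refine Finset.prod_congr rfl fun o _ => ?_
        rw [← Real.rpow_natCast (p o ^ w o) d, ← Real.rpow_mul (hppos o).le]
      rw [hXd']
      rw [Fintype.prod_option]
      simp only [hw, hp, Option.elim]
      have hkd : (k:ℝ)/(d:ℝ) * (d:ℕ) = (k:ℕ) := by
        push_cast; field_simp
      have had : ∀ i, (α i : ℝ)/(d:ℝ) * (d:ℕ) = ((α i : ℕ) : ℝ) := by
        intro i; push_cast; field_simp
      rw [hkd, Real.rpow_natCast]
      have hprod : ∀ i : Fin n, ((d:ℝ) * z i / (α i : ℝ)) ^ ((α i : ℝ)/(d:ℝ) * (d:ℕ))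
          = ((d:ℝ) * z i / (α i : ℝ)) ^ (α i) := by
        intro i
        rw [had i, Real.rpow_natCast]
      rw [Finset.prod_congr rfl (fun i _ => hprod i)]
      -- now everything is in natural powers
      have hQk : Q ^ k = P := by
        rw [hQ, ← Real.rpow_natCast (P ^ ((1:ℝ)/(k:ℝ))) k, ← Real.rpow_mul hP0.le,
          one_div, inv_mul_cancel₀ hk0.ne', Real.rpow_one]
      rw [mul_pow, hQk]
      have : (∏ i, ((α i : ℝ) / z i) ^ (α i)) * ∏ i, ((d:ℝ) * z i / (α i : ℝ)) ^ (α i)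
          = (d:ℝ) ^ s := by
        rw [← Finset.prod_mul_distrib]
        have : ∀ i : Fin n, ((α i : ℝ) / z i) ^ (α i) * ((d:ℝ) * z i / (α i : ℝ)) ^ (α i)
            = (d:ℝ) ^ (α i) := by
          intro i
          rw [← mul_pow]
          congr 1
          have h1 : ((α i : ℝ)) ≠ 0 := by exact_mod_cast (hα i).ne'
          have h2 : z i ≠ 0 := (hz i).ne'
          field_simp
        rw [Finset.prod_congr rfl (fun i _ => this i), Finset.prod_pow_eq_pow_sum, ← hs]
      calc (d:ℝ)^k * P * ∏ i, ((d:ℝ) * z i / (α i : ℝ)) ^ (α i)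
          = (|c|/(d:ℝ))^d * ((d:ℝ)^k *
              ((∏ i, ((α i : ℝ) / z i) ^ (α i)) * ∏ i, ((d:ℝ) * z i / (α i : ℝ)) ^ (α i))) := by
            rw [hP]; ring
        _ = (|c|/(d:ℝ))^d * ((d:ℝ)^k * (d:ℝ)^s) := by rw [this]
        _ = (|c|/(d:ℝ))^d * (d:ℝ)^d := by
            rw [← pow_add, hkdef, Nat.sub_add_cancel hαd.le]
        _ = |c|^d := by rw [← mul_pow, div_mul_cancel₀ _ hd0.ne']
    have hXc : X = |c| := by
      have hd0' : d ≠ 0 := by omega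
      exact (pow_left_inj₀ hX0 hc0.le hd0').mp hXd
    rw [hXc, hrhs] at key
    calc |c| ≤ ∑ i, z i + (k:ℝ) * Q := key
      _ = _ := by ring_nf
  · -- equality at z i = α i * |c| / d
    rw [← hkc]
    have hterm : ∀ i : Fin n, ((α i : ℝ) / ((α i : ℝ) * |c| / (d:ℝ))) = (d:ℝ) / |c| := by
      intro i
      have h1 : ((α i : ℝ)) ≠ 0 := by exact_mod_cast (hα i).ne'
      field_simp
    have hprod : (∏ i, ((α i : ℝ) / ((α i : ℝ) * |c| / (d:ℝ))) ^ (α i))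
        = ((d:ℝ)/|c|) ^ s := by
      rw [Finset.prod_congr rfl (fun i _ => by rw [hterm i]), Finset.prod_pow_eq_pow_sum, ← hs]
    rw [hprod]
    have hbase : (|c| / (d:ℝ)) ^ d * ((d:ℝ)/|c|) ^ s = (|c|/(d:ℝ)) ^ k := by
      have : ((d:ℝ)/|c|) ^ s = ((|c|/(d:ℝ)) ^ s)⁻¹ := by
        rw [← inv_pow, inv_div]
      rw [this, hkdef, pow_sub₀ _ ht.ne' hαd.le, div_eq_mul_inv]
    rw [hbase]
    have hroot : ((|c|/(d:ℝ)) ^ k) ^ ((1:ℝ)/(k:ℝ)) = |c|/(d:ℝ) := by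
      rw [← Real.rpow_natCast (|c|/(d:ℝ)) k, ← Real.rpow_mul ht.le,
        mul_one_div, div_self hk0.ne', Real.rpow_one]
    rw [hroot]
    have hsum : ∑ i, ((α i : ℝ) * |c| / (d:ℝ)) = (s:ℝ) * |c| / (d:ℝ) := by
      rw [← Finset.sum_div, ← Finset.sum_mul, ← Nat.cast_sum, ← hs]
    rw [hsum]
    field_simp
    nlinarith [hks]
end
end

section
/- Let α ∈ ℕⁿ with α_i > 0 for every i = 1,…,n and |α| = d, and let c ∈ ℝ with c ≠ 0. Then for every z = (z₁,…,zₙ) ∈ (0,∞)ⁿ satisfying the constraint (|c|/d)^d · ∏_{i=1}^n (α_i/z_i)^{α_i} = 1, one has ∑_{i=1}^n z_i ≥ |c|; moreover the point z_i = α_i·|c|/d (i = 1,…,n) satisfies the constraint and gives ∑_{i=1}^n z_i = |c|. In other words, the minimum value of ∑_i z_i subject to z ∈ (0,∞)ⁿ and (|c|/d)^d · ∏_i (α_i/z_i)^{α_i} = 1 is |c|, attained at z_i = α_i·|c|/d. -/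
open MvPolynomial Finset

noncomputable section


/-- Lemma (2): for `α` with all `αᵢ > 0` and `|α| = d`, the minimum of `∑ zᵢ` over
`z ∈ (0,∞)ⁿ` subject to `(|c|/d)^d ∏ (αᵢ/zᵢ)^{αᵢ} = 1` is `|c|`,
attained at `zᵢ = αᵢ|c|/d`. -/
theorem stmt18 {n : ℕ} (d : ℕ) (hd2 : 2 ≤ d) (hde : Even d)
    (α : Fin n → ℕ) (hα : ∀ i, 0 < α i) (hαd : ∑ i, α i = d)
    (c : ℝ) (hc : c ≠ 0) :
    (∀ z : Fin n → ℝ, (∀ i, 0 < z i) →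
      (|c| / (d : ℝ)) ^ d * ∏ i, ((α i : ℝ) / z i) ^ (α i) = 1 →
      |c| ≤ ∑ i, z i) ∧
    ((|c| / (d : ℝ)) ^ d *
        ∏ i, ((α i : ℝ) / ((α i : ℝ) * |c| / (d : ℝ))) ^ (α i) = 1) ∧
    (∑ i, ((α i : ℝ) * |c| / (d : ℝ))) = |c| := by
  have hd0 : (0 : ℝ) < d := by positivity
  have hc0 : (0 : ℝ) < |c| := abs_pos.mpr hc
  have hαpos : ∀ i, (0 : ℝ) < (α i : ℝ) := fun i => by exact_mod_cast hα i
  refine ⟨?_, ?_, ?_⟩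
  · intro z hz hcon
    -- weights
    set w : Fin n → ℝ := fun i => (α i : ℝ) / d with hw
    set v : Fin n → ℝ := fun i => (d : ℝ) * z i / (α i : ℝ) with hv
    have hvpos : ∀ i, 0 < v i := fun i => by
      have := hz i; have := hαpos i; positivity
    have hwsum : ∑ i, w i = 1 := by
      rw [hw, ← Finset.sum_div]
      rw [show (∑ i, (α i : ℝ)) = (d : ℝ) by exact_mod_cast congrArg (Nat.cast : ℕ → ℝ) hαd]
      field_simp
    have hgm := Real.geom_mean_le_arith_mean_weighted Finset.univ w v
      (fun i _ => by have := hαpos i; positivity) hwsum (fun i _ => (hvpos i).le)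
    have hsum : ∑ i, w i * v i = ∑ i, z i := by
      apply Finset.sum_congr rfl
      intro i _
      have := (hαpos i).ne'
      simp only [hw, hv]
      field_simp
    -- compute the geometric mean
    have hprod : ∏ i, ((z i) / (α i : ℝ)) ^ (α i) = (|c| / d) ^ d := by
      have hP : ∏ i, ((α i : ℝ) / z i) ^ (α i) = ((|c| / (d : ℝ)) ^ d)⁻¹ :=
        eq_inv_of_mul_eq_one_left (by rw [mul_comm]; exact hcon)
      have : ∏ i, ((z i) / (α i : ℝ)) ^ (α i) = (∏ i, ((α i : ℝ) / z i) ^ (α i))⁻¹ := by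
        rw [← Finset.prod_inv_distrib]
        apply Finset.prod_congr rfl
        intro i _
        rw [← inv_pow, inv_div]
      rw [this, hP, inv_inv]
    have hvp : ∏ i, (v i) ^ (α i) = |c| ^ d := by
      have : ∏ i, (v i) ^ (α i) = (∏ i, (d : ℝ) ^ (α i)) * ∏ i, ((z i) / (α i : ℝ)) ^ (α i) := by
        rw [← Finset.prod_mul_distrib]
        apply Finset.prod_congr rfl
        intro i _
        rw [← mul_pow]
        congr 1
        rw [hv]
        ring
      rw [this, hprod, Finset.prod_pow_eq_pow_sum, hαd, div_pow]
      field_simp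
    have hgmval : ∏ i, (v i) ^ (w i) = |c| := by
      have : ∀ i, (v i) ^ (w i) = ((v i) ^ (α i : ℕ)) ^ ((d : ℝ)⁻¹) := by
        intro i
        rw [← Real.rpow_natCast (v i) (α i), ← Real.rpow_mul (hvpos i).le, hw]
        simp [div_eq_mul_inv]
      rw [Finset.prod_congr rfl (fun i _ => this i),
        Real.finset_prod_rpow _ _ (fun i _ => pow_nonneg (hvpos i).le _) _, hvp,
        ← Real.rpow_natCast |c| d, ← Real.rpow_mul hc0.le]
      rw [mul_inv_cancel₀ hd0.ne', Real.rpow_one]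
    calc |c| = ∏ i, (v i) ^ (w i) := hgmval.symm
      _ ≤ ∑ i, w i * v i := hgm
      _ = ∑ i, z i := hsum
  · have : ∀ i, ((α i : ℝ) / ((α i : ℝ) * |c| / (d : ℝ))) ^ (α i) = ((d:ℝ)/|c|) ^ (α i) := by
      intro i
      congr 1
      have := (hαpos i).ne'
      field_simp
    rw [Finset.prod_congr rfl (fun i _ => this i), Finset.prod_pow_eq_pow_sum, hαd,
      ← mul_pow]
    rw [div_mul_div_comm, mul_comm |c| (d:ℝ), div_self (by positivity), one_pow]
  · rw [← Finset.sum_div, ← Finset.sum_mul,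
      show (∑ i, (α i : ℝ)) = (d : ℝ) by exact_mod_cast congrArg (Nat.cast : ℕ → ℝ) hαd]
    field_simp
end
end
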